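/- arXiv:2303.06301 — 5 statements merged into one kernel-verified Lean document; each statement's English description precedes it below -/
import Mathlib

section
/- If a finite simple graph G contains the octahedral graph O_t as a vertex-induced subgraph, then the number of maximal cliques of G is at least 2^t. -/
/-- A set of vertices is a maximal clique of `G`: it is a clique (pairwise adjacent)
and maximal under inclusion among cliques. -/
def IsMaximalClique {V : Type*} (G : SimpleGraph V) (s : Set V) : Prop :=
  G.IsClique s ∧ ∀ t : Set V, G.IsClique t → s ⊆ t → s = t

/-- The number of maximal cliques of `G`. -/
noncomputable def maxCliqueCount {V : Type*} (G : SimpleGraph V) : ℕ :=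
  {s : Set V | IsMaximalClique G s}.ncard

/-- `G` contains the octahedral graph `O_t` as a vertex-induced subgraph: there are `2t`
distinct vertices `v_0, …, v_{2t-1}` such that `v_i` and `v_j` (`i ≠ j`) are adjacent
iff `|i - j| ≠ t`. -/
def ContainsOct {V : Type*} (G : SimpleGraph V) (t : ℕ) : Prop :=
  ∃ f : Fin (2 * t) → V, Function.Injective f ∧
    ∀ i j : Fin (2 * t), i ≠ j →
      (G.Adj (f i) (f j) ↔ ¬ ((i : ℕ) + t = (j : ℕ) ∨ (j : ℕ) + t = (i : ℕ)))

/-- Every clique in a finite graph extends to a maximal clique. -/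
lemma exists_maximal_clique_ext {V : Type*} [Fintype V] (G : SimpleGraph V)
    (s : Set V) (hs : G.IsClique s) : ∃ m, IsMaximalClique G m ∧ s ⊆ m := by
  classical
  have hfin : {r : Set V | G.IsClique r ∧ s ⊆ r}.Finite := Set.toFinite _
  obtain ⟨m, hm, hmax⟩ := Set.Finite.exists_maximalFor Set.ncard _ hfin
    ⟨s, hs, subset_rfl⟩
  refine ⟨m, ⟨hm.1, ?_⟩, hm.2⟩
  intro r hr hmr
  have hrmem : r ∈ {r : Set V | G.IsClique r ∧ s ⊆ r} := ⟨hr, hm.2.trans hmr⟩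
  have hle : m.ncard ≤ r.ncard := Set.ncard_le_ncard hmr (Set.toFinite _)
  have := hmax hrmem hle
  exact Set.eq_of_subset_of_ncard_le hmr this.ge (Set.toFinite _)

/-- If a finite simple graph contains `O_t` as a vertex-induced subgraph, then it has
at least `2^t` maximal cliques. -/
theorem octahedron_lower_bound_maximal_cliques {V : Type*} [Fintype V]
    (G : SimpleGraph V) (t : ℕ) (h : ContainsOct G t) :
    2 ^ t ≤ maxCliqueCount G := by
  classical
  obtain ⟨f, hf, hadj⟩ := h
  have h1 : ∀ i : Fin t, (i : ℕ) < 2 * t := fun i => by omega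
  have h2 : ∀ i : Fin t, (i : ℕ) + t < 2 * t := fun i => by have := i.2; omega
  set idx : Finset (Fin t) → Fin t → Fin (2 * t) := fun S i =>
    if i ∈ S then ⟨i, h1 i⟩ else ⟨(i : ℕ) + t, h2 i⟩ with hidx
  have hval : ∀ S i, ((idx S i : Fin (2 * t)) : ℕ) = if i ∈ S then (i : ℕ) else (i : ℕ) + t := by
    intro S i
    simp only [hidx]
    split <;> rfl
  have hclique : ∀ S : Finset (Fin t), G.IsClique (Set.range fun i => f (idx S i)) := by
    intro S x hx y hy hxy
    obtain ⟨i, rfl⟩ := hx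
    obtain ⟨j, rfl⟩ := hy
    have hij : idx S i ≠ idx S j := fun e => hxy (congrArg f e)
    have hijn : (i : ℕ) ≠ (j : ℕ) := fun e => hij (congrArg (idx S) (Fin.ext e))
    rw [hadj _ _ hij]
    have hi := i.2; have hj := j.2
    have := hval S i; have := hval S j
    rcases Decidable.em (i ∈ S) with hiS | hiS <;>
      rcases Decidable.em (j ∈ S) with hjS | hjS <;>
      simp_all <;> omega
  choose M hM hMsub using fun S => exists_maximal_clique_ext G _ (hclique S)
  have hkey : ∀ (S S' : Finset (Fin t)) (i : Fin t), M S = M S' → i ∈ S → i ∈ S' := by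
    intro S S' i he hiS
    by_contra hiS'
    have hx : f (idx S i) ∈ M S := hMsub S ⟨i, rfl⟩
    have hy : f (idx S' i) ∈ M S := by rw [he]; exact hMsub S' ⟨i, rfl⟩
    have hvi : ((idx S i : Fin (2 * t)) : ℕ) = (i : ℕ) := by rw [hval]; simp [hiS]
    have hvi' : ((idx S' i : Fin (2 * t)) : ℕ) = (i : ℕ) + t := by rw [hval]; simp [hiS']
    have hne : idx S i ≠ idx S' i := by
      intro e
      have := i.2
      rw [e, hvi'] at hvi
      omega
    have hne' : f (idx S i) ≠ f (idx S' i) := fun e => hne (hf e)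
    have hadj' := (hM S).1 hx hy hne'
    rw [hadj _ _ hne] at hadj'
    apply hadj'
    left
    rw [hvi, hvi']
  have hinj : Function.Injective M := by
    intro S S' he
    ext i
    exact ⟨hkey S S' i he, hkey S' S i he.symm⟩
  have hinj2 : Function.Injective
      (fun S : Finset (Fin t) => (⟨M S, hM S⟩ : {s : Set V // IsMaximalClique G s})) := by
    intro S S' he
    exact hinj (congrArg Subtype.val he)
  have hcard := Nat.card_le_card_of_injective _ hinj2
  have e1 : Nat.card (Finset (Fin t)) = 2 ^ t := by
    simp [Nat.card_eq_fintype_card]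
  rw [maxCliqueCount, ← Nat.card_coe_set_eq]
  calc 2 ^ t = Nat.card (Finset (Fin t)) := e1.symm
    _ ≤ Nat.card {s : Set V // IsMaximalClique G s} := hcard
    _ = Nat.card {s : Set V | IsMaximalClique G s} := rfl
end

section
/- Let r > 0 and let v_1, v_2, w_1, w_2 be points in the Euclidean plane such that dist(v_1,v_2) > r, dist(w_1,w_2) > r, and dist(v_1,w_1) ≤ r, dist(v_1,w_2) ≤ r, dist(v_2,w_1) ≤ r, dist(v_2,w_2) ≤ r. Then the closed segments [v_1,v_2] and [w_1,w_2] have a common point. -/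
noncomputable section

/-- Euclidean distance between two points of the plane `ℝ × ℝ`. -/
def eDist (p q : ℝ × ℝ) : ℝ :=
  Real.sqrt ((p.1 - q.1) ^ 2 + (p.2 - q.2) ^ 2)

open Metric

/-- The identification of `ℝ × ℝ` with the Euclidean plane, as a linear map. -/
def eqMap : (ℝ × ℝ) →ₗ[ℝ] EuclideanSpace ℝ (Fin 2) where
  toFun p := WithLp.toLp 2 ![p.1, p.2]
  map_add' p q := by ext i; fin_cases i <;> simp [EuclideanSpace]
  map_smul' t p := by ext i; fin_cases i <;> simp [EuclideanSpace]

lemma eqMap_dist (p q : ℝ × ℝ) : dist (eqMap p) (eqMap q) = eDist p q := by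
  rw [EuclideanSpace.dist_eq, eDist]
  congr 1
  rw [Fin.sum_univ_two]
  simp [eqMap, Real.dist_eq, sq_abs]

lemma eqMap_inj : Function.Injective eqMap := by
  intro p q h
  have h0 := congrFun (congrArg WithLp.ofLp h) 0
  have h1 := congrFun (congrArg WithLp.ofLp h) 1
  simp [eqMap] at h0 h1
  exact Prod.ext h0 h1

lemma eqMap_segment (x y : ℝ × ℝ) :
    eqMap '' segment ℝ x y = segment ℝ (eqMap x) (eqMap y) := by
  simpa using image_segment ℝ eqMap.toAffineMap x y

/-- If a point lies on two crossing "diagonals" then the sums of lengths force a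
contradiction with the independence hypotheses. -/
lemma cross_contra (r : ℝ) (a b c d p : EuclideanSpace ℝ (Fin 2))
    (hab : r < dist a b) (hcd : r < dist c d)
    (hac : dist a c ≤ r) (hbd : dist b d ≤ r)
    (hp1 : p ∈ segment ℝ a c) (hp2 : p ∈ segment ℝ b d) : False := by
  have e1 : dist a p + dist p c = dist a c :=
    dist_add_dist_eq_iff.2 (mem_segment_iff_wbtw.1 hp1)
  have e2 : dist b p + dist p d = dist b d :=
    dist_add_dist_eq_iff.2 (mem_segment_iff_wbtw.1 hp2)
  have t1 : dist a b ≤ dist a p + dist p b := dist_triangle a p b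
  have t2 : dist c d ≤ dist c p + dist p d := dist_triangle c p d
  have h1 : dist p b = dist b p := dist_comm _ _
  have h2 : dist c p = dist p c := dist_comm _ _
  linarith

/-- The main theorem, in the genuine Euclidean plane. -/
theorem aux_independent (r : ℝ) (hr : 0 < r) (a b c d : EuclideanSpace ℝ (Fin 2))
    (hab : r < dist a b) (hcd : r < dist c d)
    (h11 : dist a c ≤ r) (h12 : dist a d ≤ r)
    (h21 : dist b c ≤ r) (h22 : dist b d ≤ r) :
    (segment ℝ a b ∩ segment ℝ c d).Nonempty := by
  classical
  set f : Fin 4 → EuclideanSpace ℝ (Fin 2) := ![a, b, c, d] with hf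
  have hnai : ¬ AffineIndependent ℝ f := by
    intro h
    have h1 := h.card_le_finrank_succ
    have h2 : Module.finrank ℝ (vectorSpan ℝ (Set.range f)) ≤ 2 := by
      have := Submodule.finrank_le (vectorSpan ℝ (Set.range f))
      simpa [finrank_euclideanSpace] using this
    simp [Fintype.card_fin] at h1
    omega
  obtain ⟨I, p, hpI, hpIc⟩ := Convex.radon_partition (𝕜 := ℝ) hnai
  have himg : ∀ (J : Set (Fin 4)) (S : Set (EuclideanSpace ℝ (Fin 2))),
      (0 ∈ J → a ∈ S) → (1 ∈ J → b ∈ S) → (2 ∈ J → c ∈ S) → (3 ∈ J → d ∈ S) →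
      f '' J ⊆ S := by
    rintro J S g0 g1 g2 g3 _ ⟨x, hx, rfl⟩
    fin_cases x
    · exact g0 hx
    · exact g1 hx
    · exact g2 hx
    · exact g3 hx
  have key : ∀ (J : Set (Fin 4)) (S : Set (EuclideanSpace ℝ (Fin 2))), Convex ℝ S →
      (0 ∈ J → a ∈ S) → (1 ∈ J → b ∈ S) → (2 ∈ J → c ∈ S) → (3 ∈ J → d ∈ S) →
      ∀ q ∈ convexHull ℝ (f '' J), q ∈ S :=
    fun J S hS g0 g1 g2 g3 q hq => convexHull_min (himg J S g0 g1 g2 g3) hS hq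
  have selfball : ∀ x : EuclideanSpace ℝ (Fin 2), x ∈ closedBall x r :=
    fun x => mem_closedBall_self hr.le
  have ball' : ∀ x y : EuclideanSpace ℝ (Fin 2), dist x y ≤ r → y ∈ closedBall x r := by
    intro x y h; rw [mem_closedBall, dist_comm]; exact h
  have ball'' : ∀ x y : EuclideanSpace ℝ (Fin 2), dist x y ≤ r → x ∈ closedBall y r := by
    intro x y h; rwa [mem_closedBall]
  by_cases m0 : (0 : Fin 4) ∈ I <;> by_cases m1 : (1 : Fin 4) ∈ I <;>
    by_cases m2 : (2 : Fin 4) ∈ I <;> by_cases m3 : (3 : Fin 4) ∈ I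
  -- TTTT : Iᶜ empty
  · exact (key Iᶜ ∅ convex_empty (fun h => absurd m0 h) (fun h => absurd m1 h)
      (fun h => absurd m2 h) (fun h => absurd m3 h) p hpIc).elim
  -- TTTF : Iᶜ = {d}
  · have hpd := key Iᶜ {d} (convex_singleton d) (fun h => absurd m0 h) (fun h => absurd m1 h)
      (fun h => absurd m2 h) (fun _ => rfl) p hpIc
    have hpc := key I (closedBall c r) (convex_closedBall c r)
      (fun _ => ball'' a c h11) (fun _ => ball'' b c h21) (fun _ => selfball c)
      (fun h => absurd h m3) p hpI
    rw [Set.mem_singleton_iff] at hpd; subst hpd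
    rw [mem_closedBall, dist_comm] at hpc
    linarith
  -- TTFT : Iᶜ = {c}
  · have hpc := key Iᶜ {c} (convex_singleton c) (fun h => absurd m0 h) (fun h => absurd m1 h)
      (fun _ => rfl) (fun h => absurd m3 h) p hpIc
    have hpd := key I (closedBall d r) (convex_closedBall d r)
      (fun _ => ball'' a d h12) (fun _ => ball'' b d h22) (fun h => absurd h m2)
      (fun _ => selfball d) p hpI
    rw [Set.mem_singleton_iff] at hpc; subst hpc
    rw [mem_closedBall] at hpd
    linarith
  -- TTFF : I = {a,b}, goal
  · have hp1 := key I (segment ℝ a b) (convex_segment a b) (fun _ => left_mem_segment ℝ a b)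
      (fun _ => right_mem_segment ℝ a b) (fun h => absurd h m2) (fun h => absurd h m3) p hpI
    have hp2 := key Iᶜ (segment ℝ c d) (convex_segment c d) (fun h => absurd m0 h)
      (fun h => absurd m1 h) (fun _ => left_mem_segment ℝ c d)
      (fun _ => right_mem_segment ℝ c d) p hpIc
    exact ⟨p, hp1, hp2⟩
  -- TFTT : Iᶜ = {b}
  · have hpb := key Iᶜ {b} (convex_singleton b) (fun h => absurd m0 h) (fun _ => rfl)
      (fun h => absurd m2 h) (fun h => absurd m3 h) p hpIc
    have hpa := key I (closedBall a r) (convex_closedBall a r)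
      (fun _ => selfball a) (fun h => absurd h m1) (fun _ => ball' a c h11)
      (fun _ => ball' a d h12) p hpI
    rw [Set.mem_singleton_iff] at hpb; subst hpb
    rw [mem_closedBall, dist_comm] at hpa
    linarith
  -- TFTF : I = {a,c}, cross
  · have hp1 := key I (segment ℝ a c) (convex_segment a c) (fun _ => left_mem_segment ℝ a c)
      (fun h => absurd h m1) (fun _ => right_mem_segment ℝ a c) (fun h => absurd h m3) p hpI
    have hp2 := key Iᶜ (segment ℝ b d) (convex_segment b d) (fun h => absurd m0 h)
      (fun _ => left_mem_segment ℝ b d) (fun h => absurd m2 h)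
      (fun _ => right_mem_segment ℝ b d) p hpIc
    exact (cross_contra r a b c d p hab hcd h11 h22 hp1 hp2).elim
  -- TFFT : I = {a,d}, cross
  · have hp1 := key I (segment ℝ a d) (convex_segment a d) (fun _ => left_mem_segment ℝ a d)
      (fun h => absurd h m1) (fun h => absurd h m2) (fun _ => right_mem_segment ℝ a d) p hpI
    have hp2 := key Iᶜ (segment ℝ b c) (convex_segment b c) (fun h => absurd m0 h)
      (fun _ => left_mem_segment ℝ b c) (fun _ => right_mem_segment ℝ b c)
      (fun h => absurd m3 h) p hpIc
    exact (cross_contra r a b d c p hab (by rwa [dist_comm]) h12 h21 hp1 hp2).elim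
  -- TFFF : I = {a}
  · have hpa := key I {a} (convex_singleton a) (fun _ => rfl) (fun h => absurd h m1)
      (fun h => absurd h m2) (fun h => absurd h m3) p hpI
    have hpb := key Iᶜ (closedBall b r) (convex_closedBall b r) (fun h => absurd m0 h)
      (fun _ => selfball b) (fun _ => ball' b c h21) (fun _ => ball' b d h22) p hpIc
    rw [Set.mem_singleton_iff] at hpa; subst hpa
    rw [mem_closedBall] at hpb
    linarith
  -- FTTT : Iᶜ = {a}
  · have hpa := key Iᶜ {a} (convex_singleton a) (fun _ => rfl) (fun h => absurd m1 h)
      (fun h => absurd m2 h) (fun h => absurd m3 h) p hpIc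
    have hpb := key I (closedBall b r) (convex_closedBall b r) (fun h => absurd h m0)
      (fun _ => selfball b) (fun _ => ball' b c h21) (fun _ => ball' b d h22) p hpI
    rw [Set.mem_singleton_iff] at hpa; subst hpa
    rw [mem_closedBall] at hpb
    linarith
  -- FTTF : I = {b,c}, cross
  · have hp2 := key I (segment ℝ b c) (convex_segment b c) (fun h => absurd h m0)
      (fun _ => left_mem_segment ℝ b c) (fun _ => right_mem_segment ℝ b c)
      (fun h => absurd h m3) p hpI
    have hp1 := key Iᶜ (segment ℝ a d) (convex_segment a d) (fun _ => left_mem_segment ℝ a d)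
      (fun h => absurd m1 h) (fun h => absurd m2 h) (fun _ => right_mem_segment ℝ a d) p hpIc
    exact (cross_contra r a b d c p hab (by rwa [dist_comm]) h12 h21 hp1 hp2).elim
  -- FTFT : I = {b,d}, cross
  · have hp2 := key I (segment ℝ b d) (convex_segment b d) (fun h => absurd h m0)
      (fun _ => left_mem_segment ℝ b d) (fun h => absurd h m2)
      (fun _ => right_mem_segment ℝ b d) p hpI
    have hp1 := key Iᶜ (segment ℝ a c) (convex_segment a c) (fun _ => left_mem_segment ℝ a c)
      (fun h => absurd m1 h) (fun _ => right_mem_segment ℝ a c) (fun h => absurd m3 h) p hpIc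
    exact (cross_contra r a b c d p hab hcd h11 h22 hp1 hp2).elim
  -- FTFF : I = {b}
  · have hpb := key I {b} (convex_singleton b) (fun h => absurd h m0) (fun _ => rfl)
      (fun h => absurd h m2) (fun h => absurd h m3) p hpI
    have hpa := key Iᶜ (closedBall a r) (convex_closedBall a r) (fun _ => selfball a)
      (fun h => absurd m1 h) (fun _ => ball' a c h11) (fun _ => ball' a d h12) p hpIc
    rw [Set.mem_singleton_iff] at hpb; subst hpb
    rw [mem_closedBall, dist_comm] at hpa
    linarith
  -- FFTT : I = {c,d}, goal
  · have hp2 := key I (segment ℝ c d) (convex_segment c d) (fun h => absurd h m0)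
      (fun h => absurd h m1) (fun _ => left_mem_segment ℝ c d)
      (fun _ => right_mem_segment ℝ c d) p hpI
    have hp1 := key Iᶜ (segment ℝ a b) (convex_segment a b) (fun _ => left_mem_segment ℝ a b)
      (fun _ => right_mem_segment ℝ a b) (fun h => absurd m2 h) (fun h => absurd m3 h) p hpIc
    exact ⟨p, hp1, hp2⟩
  -- FFTF : I = {c}
  · have hpc := key I {c} (convex_singleton c) (fun h => absurd h m0) (fun h => absurd h m1)
      (fun _ => rfl) (fun h => absurd h m3) p hpI
    have hpd := key Iᶜ (closedBall d r) (convex_closedBall d r) (fun _ => ball'' a d h12)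
      (fun _ => ball'' b d h22) (fun h => absurd m2 h) (fun _ => selfball d) p hpIc
    rw [Set.mem_singleton_iff] at hpc; subst hpc
    rw [mem_closedBall] at hpd
    linarith
  -- FFFT : I = {d}
  · have hpd := key I {d} (convex_singleton d) (fun h => absurd h m0) (fun h => absurd h m1)
      (fun h => absurd h m2) (fun _ => rfl) p hpI
    have hpc := key Iᶜ (closedBall c r) (convex_closedBall c r) (fun _ => ball'' a c h11)
      (fun _ => ball'' b c h21) (fun _ => selfball c) (fun h => absurd m3 h) p hpIc
    rw [Set.mem_singleton_iff] at hpd; subst hpd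
    rw [mem_closedBall, dist_comm] at hpc
    linarith
  -- FFFF : I empty
  · exact (key I ∅ convex_empty (fun h => absurd h m0) (fun h => absurd h m1)
      (fun h => absurd h m2) (fun h => absurd h m3) p hpI).elim

/-- Two independent segments in the Euclidean plane intersect: if `dist(v₁,v₂) > r`,
`dist(w₁,w₂) > r`, and all four cross distances are at most `r`, then the closed
segments `[v₁,v₂]` and `[w₁,w₂]` have a common point. -/
theorem independent_segments_intersect (r : ℝ) (hr : 0 < r) (v₁ v₂ w₁ w₂ : ℝ × ℝ)
    (hv : r < eDist v₁ v₂) (hw : r < eDist w₁ w₂)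
    (h11 : eDist v₁ w₁ ≤ r) (h12 : eDist v₁ w₂ ≤ r)
    (h21 : eDist v₂ w₁ ≤ r) (h22 : eDist v₂ w₂ ≤ r) :
    (segment ℝ v₁ v₂ ∩ segment ℝ w₁ w₂).Nonempty := by
  simp only [← eqMap_dist] at hv hw h11 h12 h21 h22
  obtain ⟨z, hz1, hz2⟩ := aux_independent r hr (eqMap v₁) (eqMap v₂) (eqMap w₁) (eqMap w₂)
    hv hw h11 h12 h21 h22
  rw [← eqMap_segment] at hz1 hz2
  obtain ⟨q, hq, rfl⟩ := hz1
  obtain ⟨q', hq', hEq⟩ := hz2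
  exact ⟨q, hq, eqMap_inj hEq ▸ hq'⟩

end
end

section
/- Let r > 0 and 0 ≤ θ_0 ≤ π/3. Let s = v_1v_2 and s' = w_1w_2 be independent segments in the Euclidean plane (so dist(v_1,v_2) > r, dist(w_1,w_2) > r, and all four cross distances are at most r), intersecting at a point q, with the counter-clockwise order of the four endpoints being v_1, w_1, v_2, w_2, and let the directed angle ∠(s,s') = ∠w_1 q v_1. Let m be the midpoint of v_1 and v_2 and let r_0 = dist(m, w_1). If ∠(s,s') ≤ θ_0, then (−1/2 + cos θ_0)·√(cos θ_0)·r ≤ r_0 ≤ (3/2 − cos θ_0)·r. -/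
noncomputable section

/-- The cross product (signed area) of two plane vectors. -/
def cross (u w : ℝ × ℝ) : ℝ := u.1 * w.2 - u.2 * w.1

/-- The (undirected) angle `∠ a q b` at the vertex `q`. -/
def angAt (q a b : ℝ × ℝ) : ℝ :=
  Real.arccos (((a.1 - q.1) * (b.1 - q.1) + (a.2 - q.2) * (b.2 - q.2)) /
    (eDist q a * eDist q b))

private lemma sqrt_le_imp {s r : ℝ} (hs : 0 ≤ s) (h : Real.sqrt s ≤ r) : s ≤ r ^ 2 := by
  nlinarith [Real.sq_sqrt hs, Real.sqrt_nonneg s]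

private lemma pdiv_bounds (p X L M : ℝ) (hL0 : 0 < L) (hM0 : 0 < M)
    (hLag : p^2 + X^2 = L^2*M^2) : -1 ≤ p/(L*M) ∧ p/(L*M) ≤ 1 := by
  have hLM : 0 < L*M := mul_pos hL0 hM0
  have h1 : p^2 ≤ (L*M)^2 := by nlinarith [sq_nonneg X]
  constructor
  · rw [le_div_iff₀ hLM]; nlinarith [sq_nonneg (p + L*M)]
  · rw [div_le_one hLM]; nlinarith [sq_nonneg (p - L*M)]

set_option maxHeartbeats 1000000 in
private lemma lower_aux (r L M k t u p X Q : ℝ) (hr : 0 < r) (hL : r < L) (hM : r < M)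
    (hk : 1/2 ≤ k) (hk1 : k ≤ 1) (ht0 : 0 ≤ t) (hu1 : u ≤ 1)
    (hkp : k * (L*M) ≤ p)
    (hLag : p^2 + X^2 = L^2 * M^2)
    (hC12 : t^2*L^2 + 2*t*(1-u)*p + (1-u)^2*M^2 ≤ r^2)
    (hQ : Q * L^2 = (u*p - (2*t-1)*L^2/2)^2 + u^2*X^2) :
    k * (k - 1/2)^2 * r^2 ≤ Q := by
  have hL0 : 0 < L := lt_trans hr hL
  have hM0 : 0 < M := lt_trans hr hM
  have hk0 : 0 ≤ k := by linarith
  have hp0 : 0 ≤ p := le_trans (by positivity) hkp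
  have ha'0 : 0 ≤ t*L^2 + (1-u)*p := by
    have h1 : 0 ≤ t*L^2 := by positivity
    have h2 : 0 ≤ (1-u)*p := mul_nonneg (by linarith) hp0
    linarith
  have hid : (t*L^2 + (1-u)*p)^2 =
      (t^2*L^2 + 2*t*(1-u)*p + (1-u)^2*M^2)*L^2 - (1-u)^2*X^2 := by
    linear_combination (1-u)^2*hLag
  have ha'sq : (t*L^2 + (1-u)*p)^2 ≤ r^2*L^2 := by
    linarith [hid, mul_le_mul_of_nonneg_right hC12 (sq_nonneg L), sq_nonneg ((1-u)*X)]
  have ha' : t*L^2 + (1-u)*p ≤ r*L := by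
    nlinarith [ha'sq, ha'0, mul_pos hr hL0]
  have hKlb : L*r*(k-1/2) ≤ u*p - (2*t-1)*L^2/2 := by
    linarith [ha', hkp, mul_nonneg (mul_nonneg hk0 hL0.le) (sub_nonneg.2 hM.le),
      mul_nonneg hL0.le (sub_nonneg.2 hL.le), mul_nonneg hr.le (sub_nonneg.2 hL.le)]
  have hKlb0 : 0 ≤ L*r*(k-1/2) := by
    have : 0 ≤ k - 1/2 := by linarith
    positivity
  have hK2 : (L*r*(k-1/2))^2 ≤ (u*p - (2*t-1)*L^2/2)^2 := by
    linarith [mul_self_le_mul_self hKlb0 hKlb, sq_nonneg (L*r*(k-1/2))]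
  have hQlb : r^2*(k-1/2)^2 ≤ Q := by
    nlinarith [hQ, hK2, sq_nonneg (u*X), mul_pos hL0 hL0]
  linarith [hQlb, mul_nonneg (mul_nonneg (sub_nonneg.2 hk1) (sq_nonneg (k-1/2))) (sq_nonneg r)]

set_option maxHeartbeats 1000000 in
private lemma H_aux (r L M k t u p X : ℝ) (hr : 0 < r) (hL : r < L) (hM : r < M)
    (hk0 : 0 ≤ k) (ht1 : t ≤ 1) (hu0 : 0 ≤ u) (hkp : k*(L*M) ≤ p)
    (hLag : p^2 + X^2 = L^2*M^2)
    (hy : ((1-t)*L^2 + u*p)^2 + u^2*X^2 ≤ r^2*L^2) :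
    u^2*X^2 ≤ r^2*L^2*(1-k^2) := by
  have hL0 : 0 < L := lt_trans hr hL
  have hM0 : 0 < M := lt_trans hr hM
  have hp0 : 0 ≤ p := le_trans (by positivity) hkp
  have hup0 : 0 ≤ u*p := mul_nonneg hu0 hp0
  have hy0 : 0 ≤ (1-t)*L^2 := mul_nonneg (by linarith) (sq_nonneg L)
  have h1 : (u*p)^2 ≤ ((1-t)*L^2 + u*p)^2 :=
    pow_le_pow_left₀ hup0 (by linarith) 2
  have hLagu : u^2*p^2 + u^2*X^2 = u^2*(L^2*M^2) := by linear_combination u^2*hLag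
  have hS1 : u^2*(L^2*M^2) ≤ r^2*L^2 := by linarith [h1, hy, hLagu]
  have hS2 : u^2*M^2 ≤ r^2 := by nlinarith [hS1, mul_pos hL0 hL0]
  have hS3 : X^2 ≤ L^2*M^2*(1-k^2) := by
    have h2 := mul_self_le_mul_self (mul_nonneg hk0 (mul_pos hL0 hM0).le) hkp
    linarith [hLag, h2]
  have h4 := mul_le_mul_of_nonneg_right hS2 (sq_nonneg X)
  have h5 := mul_le_mul_of_nonneg_left hS3 (sq_nonneg r)
  nlinarith [h4, h5, mul_pos hM0 hM0]

set_option maxHeartbeats 1000000 in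
private lemma upper_aux (r L k x y H Q : ℝ) (hr : 0 < r) (hL : r < L)
    (hk : 1/2 ≤ k) (hk1 : k ≤ 1)
    (hx : x^2 + H ≤ r^2*L^2) (hy : y^2 + H ≤ r^2*L^2) (hxy : x + y = L^2)
    (hH0 : 0 ≤ H) (hHk : H ≤ r^2*L^2*(1-k^2))
    (hQ : Q*L^2 = ((y-x)/2)^2 + H) :
    Q ≤ (3/2-k)^2*r^2 := by
  have hL0 : 0 < L := lt_trans hr hL
  have hk0 : 0 ≤ k := by linarith
  have hRnn : 0 ≤ r^2*L^2 - H := by linarith [hx, sq_nonneg x]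
  set R := Real.sqrt (r^2*L^2 - H) with hRdef
  have hR0 : 0 ≤ R := Real.sqrt_nonneg _
  have hR2 : R^2 = r^2*L^2 - H := Real.sq_sqrt hRnn
  have hRk : k*L*r ≤ R := by
    rw [hRdef]
    exact (Real.le_sqrt (by positivity) hRnn).mpr (by nlinarith [hHk])
  have hLsq : 0 < L*L := mul_pos hL0 hL0
  have hLr : L*r ≤ L^2 := by nlinarith
  have key : ((y-x)/2)^2 + H ≤ (3/2-k)^2*r^2*L^2 := by
    rcases le_total x y with hc | hc
    · have hyhalf : L^2/2 ≤ y := by linarith [hLsq]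
      have hy0 : 0 ≤ y := by linarith [hLsq]
      have hyR : y ≤ R := by
        rw [hRdef]; exact (Real.le_sqrt hy0 hRnn).mpr (by linarith [hy])
      have h2 : y - L^2/2 ≤ R - L*r/2 := by linarith
      have h1 : 0 ≤ y - L^2/2 := by linarith
      have h3 : (y - L^2/2)^2 ≤ (R - L*r/2)^2 := by
        nlinarith [mul_self_le_mul_self h1 h2]
      have h4 : ((y-x)/2)^2 = (y - L^2/2)^2 := by
        have h5 : (y-x)/2 = y - L^2/2 := by linarith
        rw [h5]
      rw [h4]
      linarith [h3, hR2, mul_le_mul_of_nonneg_left hRk (by positivity : (0:ℝ) ≤ L*r),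
        mul_nonneg (sq_nonneg (1-k)) (by positivity : (0:ℝ) ≤ r^2*L^2)]
    · have hyhalf : L^2/2 ≤ x := by linarith [hLsq]
      have hy0 : 0 ≤ x := by linarith [hLsq]
      have hyR : x ≤ R := by
        rw [hRdef]; exact (Real.le_sqrt hy0 hRnn).mpr (by linarith [hx])
      have h2 : x - L^2/2 ≤ R - L*r/2 := by linarith
      have h1 : 0 ≤ x - L^2/2 := by linarith
      have h3 : (x - L^2/2)^2 ≤ (R - L*r/2)^2 := by
        nlinarith [mul_self_le_mul_self h1 h2]
      have h4 : ((y-x)/2)^2 = (x - L^2/2)^2 := by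
        have h5 : (y-x)/2 = -(x - L^2/2) := by linarith
        rw [h5]; ring
      rw [h4]
      linarith [h3, hR2, mul_le_mul_of_nonneg_left hRk (by positivity : (0:ℝ) ≤ L*r),
        mul_nonneg (sq_nonneg (1-k)) (by positivity : (0:ℝ) ≤ r^2*L^2)]
  nlinarith [key, hQ, mul_pos hL0 hL0]

set_option maxHeartbeats 1600000 in
/-- If two independent segments `v₁v₂`, `w₁w₂` intersect at `q`, with the four endpoints
in counter-clockwise order `v₁, w₁, v₂, w₂` around `q`, and the directed angle
`∠(s,s') = ∠ w₁ q v₁` is at most `θ₀ ≤ π/3`, then the distance `r₀` from the midpoint `m`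
of `v₁v₂` to `w₁` satisfies `(−1/2 + cos θ₀)√(cos θ₀)·r ≤ r₀ ≤ (3/2 − cos θ₀)·r`. -/
theorem independent_segments_midpoint_distance (r θ₀ : ℝ) (hr : 0 < r)
    (hθ₀0 : 0 ≤ θ₀) (hθ₀1 : θ₀ ≤ Real.pi / 3)
    (v₁ v₂ w₁ w₂ q : ℝ × ℝ)
    (hv : r < eDist v₁ v₂) (hw : r < eDist w₁ w₂)
    (h11 : eDist v₁ w₁ ≤ r) (h12 : eDist v₁ w₂ ≤ r)
    (h21 : eDist v₂ w₁ ≤ r) (h22 : eDist v₂ w₂ ≤ r)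
    (hq₁ : q ∈ segment ℝ v₁ v₂) (hq₂ : q ∈ segment ℝ w₁ w₂)
    (hccw₁ : 0 < cross (v₁ - q) (w₁ - q)) (hccw₂ : 0 < cross (w₁ - q) (v₂ - q))
    (hccw₃ : 0 < cross (v₂ - q) (w₂ - q)) (hccw₄ : 0 < cross (w₂ - q) (v₁ - q))
    (hang : angAt q w₁ v₁ ≤ θ₀) :
    (-(1 / 2) + Real.cos θ₀) * Real.sqrt (Real.cos θ₀) * r
        ≤ eDist (midpoint ℝ v₁ v₂) w₁ ∧
      eDist (midpoint ℝ v₁ v₂) w₁ ≤ (3 / 2 - Real.cos θ₀) * r := by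
  obtain ⟨a, t, ha0, ht0, hat, hqv⟩ := hq₁
  obtain ⟨c, u, hc0, hu0, hcu, hqw⟩ := hq₂
  have ha : a = 1 - t := by linarith
  have hc : c = 1 - u := by linarith
  subst ha hc
  have ht1 : t ≤ 1 := by linarith
  have hu1 : u ≤ 1 := by linarith
  have hqv1 : (1-t) * v₁.1 + t * v₂.1 = q.1 := by
    have h := congrArg Prod.fst hqv; simpa using h
  have hqv2 : (1-t) * v₁.2 + t * v₂.2 = q.2 := by
    have h := congrArg Prod.snd hqv; simpa using h
  have hqw1 : (1-u) * w₁.1 + u * w₂.1 = q.1 := by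
    have h := congrArg Prod.fst hqw; simpa using h
  have hqw2 : (1-u) * w₁.2 + u * w₂.2 = q.2 := by
    have h := congrArg Prod.snd hqw; simpa using h
  clear hqv hqw ha0 hc0
  simp only [eDist] at hv hw h11 h12 h21 h22
  simp only [angAt, eDist] at hang
  simp only [eDist]
  set e1 := v₁.1 - v₂.1 with he1
  set e2 := v₁.2 - v₂.2 with he2
  set f1 := w₁.1 - w₂.1 with hf1
  set f2 := w₁.2 - w₂.2 with hf2
  have ha1 : v₁.1 - q.1 = t * e1 := by rw [he1]; linear_combination hqv1
  have ha2 : v₁.2 - q.2 = t * e2 := by rw [he2]; linear_combination hqv2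
  have hb1 : v₂.1 - q.1 = (t-1) * e1 := by rw [he1]; linear_combination hqv1
  have hb2 : v₂.2 - q.2 = (t-1) * e2 := by rw [he2]; linear_combination hqv2
  have hc1 : w₁.1 - q.1 = u * f1 := by rw [hf1]; linear_combination hqw1
  have hc2 : w₁.2 - q.2 = u * f2 := by rw [hf2]; linear_combination hqw2
  have hd1 : w₂.1 - q.1 = (u-1) * f1 := by rw [hf1]; linear_combination hqw1
  have hd2 : w₂.2 - q.2 = (u-1) * f2 := by rw [hf2]; linear_combination hqw2
  -- lengths
  set L := Real.sqrt (e1^2 + e2^2) with hLdef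
  set M := Real.sqrt (f1^2 + f2^2) with hMdef
  have hLsq : L^2 = e1^2 + e2^2 := Real.sq_sqrt (by positivity)
  have hMsq : M^2 = f1^2 + f2^2 := Real.sq_sqrt (by positivity)
  have hrL : r < L := hv
  have hrM : r < M := hw
  have hL0 : 0 < L := lt_trans hr hrL
  have hM0 : 0 < M := lt_trans hr hrM
  -- dot and cross products
  set p := e1*f1 + e2*f2 with hp
  set X := e1*f2 - e2*f1 with hX
  have hLag : p^2 + X^2 = L^2 * M^2 := by
    rw [hp, hX, hLsq, hMsq]; ring
  -- positivity of t, u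
  simp only [cross, Prod.fst_sub, Prod.snd_sub] at hccw₁ hccw₂ hccw₄
  rw [ha1, hc2, ha2, hc1] at hccw₁
  rw [hc1, hb2, hc2, hb1] at hccw₂
  rw [hd1, ha2, hd2, ha1] at hccw₄
  have G1 : 0 < t*u*X := hccw₁.trans_eq (by rw [hX]; ring)
  have G2 : 0 < u*(1-t)*X := hccw₂.trans_eq (by rw [hX]; ring)
  have G4 : 0 < t*(1-u)*X := hccw₄.trans_eq (by rw [hX]; ring)
  clear hccw₁ hccw₂ hccw₃ hccw₄
  have hXp : 0 < X := by
    by_contra h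
    push_neg at h
    have h2 := mul_nonneg (mul_nonneg ht0 hu0) (neg_nonneg.2 h)
    linarith [G1, h2]
  have htp : 0 < t := by
    by_contra h
    push_neg at h
    have h2 := mul_nonneg (neg_nonneg.2 h) (mul_nonneg hu0 hXp.le)
    linarith [G1, h2]
  have hup : 0 < u := by
    by_contra h
    push_neg at h
    have h2 := mul_nonneg (neg_nonneg.2 h) (mul_nonneg ht0 hXp.le)
    linarith [G1, h2]
  have htl : t < 1 := by
    by_contra h
    push_neg at h
    have h2 := mul_nonneg (mul_nonneg hup.le (by linarith : (0:ℝ) ≤ t - 1)) hXp.le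
    linarith [G2, h2]
  have hul : u < 1 := by
    by_contra h
    push_neg at h
    have h2 := mul_nonneg (mul_nonneg htp.le (by linarith : (0:ℝ) ≤ u - 1)) hXp.le
    linarith [G4, h2]
  clear G1 G2 G4
  -- the angle hypothesis
  have hsv : Real.sqrt ((q.1 - v₁.1)^2 + (q.2 - v₁.2)^2) = t*L := by
    have h1 : (q.1 - v₁.1)^2 + (q.2 - v₁.2)^2 = (t*L)^2 := by
      rw [show q.1 - v₁.1 = -(t*e1) from by linear_combination -ha1,
          show q.2 - v₁.2 = -(t*e2) from by linear_combination -ha2, mul_pow, hLsq]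
      ring
    rw [h1, Real.sqrt_sq (mul_nonneg ht0 hL0.le)]
  have hsw : Real.sqrt ((q.1 - w₁.1)^2 + (q.2 - w₁.2)^2) = u*M := by
    have h1 : (q.1 - w₁.1)^2 + (q.2 - w₁.2)^2 = (u*M)^2 := by
      rw [show q.1 - w₁.1 = -(u*f1) from by linear_combination -hc1,
          show q.2 - w₁.2 = -(u*f2) from by linear_combination -hc2, mul_pow, hMsq]
      ring
    rw [h1, Real.sqrt_sq (mul_nonneg hu0 hM0.le)]
  have hnum : (w₁.1 - q.1) * (v₁.1 - q.1) + (w₁.2 - q.2) * (v₁.2 - q.2) = t*u*p := by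
    rw [ha1, ha2, hc1, hc2, hp]; ring
  rw [hnum, hsw, hsv] at hang
  have harg : t*u*p / (u*M*(t*L)) = p/(L*M) := by
    have h1 : t ≠ 0 := htp.ne'
    have h2 : u ≠ 0 := hup.ne'
    have h3 : L ≠ 0 := hL0.ne'
    have h4 : M ≠ 0 := hM0.ne'
    field_simp
  rw [harg] at hang
  set k := Real.cos θ₀ with hkdef
  have hpi : θ₀ ≤ Real.pi := by linarith [Real.pi_pos, hθ₀1]
  have hpb := pdiv_bounds p X L M hL0 hM0 hLag
  have hcos : k ≤ p/(L*M) := by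
    have h1 := Real.cos_le_cos_of_nonneg_of_le_pi (Real.arccos_nonneg _) hpi hang
    rwa [Real.cos_arccos hpb.1 hpb.2] at h1
  have hkp : k*(L*M) ≤ p := (le_div_iff₀ (mul_pos hL0 hM0)).mp hcos
  have hk : 1/2 ≤ k := by
    rw [hkdef, ← Real.cos_pi_div_three]
    exact Real.cos_le_cos_of_nonneg_of_le_pi hθ₀0 (by linarith [Real.pi_pos]) hθ₀1
  have hk1 : k ≤ 1 := Real.cos_le_one θ₀
  have hk0 : (0:ℝ) ≤ k := by linarith
  -- squared distance constraints
  have hC11 : t^2*L^2 - 2*t*u*p + u^2*M^2 ≤ r^2 := by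
    have h := sqrt_le_imp (by positivity) h11
    have he : (v₁.1 - w₁.1)^2 + (v₁.2 - w₁.2)^2
        = t^2*L^2 - 2*t*u*p + u^2*M^2 := by
      rw [show v₁.1 - w₁.1 = t*e1 - u*f1 from by linear_combination ha1 - hc1,
          show v₁.2 - w₁.2 = t*e2 - u*f2 from by linear_combination ha2 - hc2,
          hLsq, hMsq, hp]
      ring
    linarith [he ▸ h]
  have hC12 : t^2*L^2 + 2*t*(1-u)*p + (1-u)^2*M^2 ≤ r^2 := by
    have h := sqrt_le_imp (by positivity) h12
    have he : (v₁.1 - w₂.1)^2 + (v₁.2 - w₂.2)^2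
        = t^2*L^2 + 2*t*(1-u)*p + (1-u)^2*M^2 := by
      rw [show v₁.1 - w₂.1 = t*e1 - (u-1)*f1 from by linear_combination ha1 - hd1,
          show v₁.2 - w₂.2 = t*e2 - (u-1)*f2 from by linear_combination ha2 - hd2,
          hLsq, hMsq, hp]
      ring
    linarith [he ▸ h]
  have hC21 : (1-t)^2*L^2 + 2*(1-t)*u*p + u^2*M^2 ≤ r^2 := by
    have h := sqrt_le_imp (by positivity) h21
    have he : (v₂.1 - w₁.1)^2 + (v₂.2 - w₁.2)^2
        = (1-t)^2*L^2 + 2*(1-t)*u*p + u^2*M^2 := by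
      rw [show v₂.1 - w₁.1 = (t-1)*e1 - u*f1 from by linear_combination hb1 - hc1,
          show v₂.2 - w₁.2 = (t-1)*e2 - u*f2 from by linear_combination hb2 - hc2,
          hLsq, hMsq, hp]
      ring
    linarith [he ▸ h]
  clear h11 h12 h21 h22 hang
  -- midpoint
  have hm1 : (midpoint ℝ v₁ v₂).1 = (v₁.1 + v₂.1)/2 := by
    simp [midpoint_eq_smul_add]; ring
  have hm2 : (midpoint ℝ v₁ v₂).2 = (v₁.2 + v₂.2)/2 := by
    simp [midpoint_eq_smul_add]; ring
  have hmd1 : (midpoint ℝ v₁ v₂).1 - w₁.1 = (2*t-1)/2*e1 - u*f1 := by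
    rw [hm1]; linear_combination (1/2)*ha1 + (1/2)*hb1 - hc1
  have hmd2 : (midpoint ℝ v₁ v₂).2 - w₁.2 = (2*t-1)/2*e2 - u*f2 := by
    rw [hm2]; linear_combination (1/2)*ha2 + (1/2)*hb2 - hc2
  set Qe := ((midpoint ℝ v₁ v₂).1 - w₁.1)^2 + ((midpoint ℝ v₁ v₂).2 - w₁.2)^2 with hQedef
  have hQe0 : 0 ≤ Qe := by rw [hQedef]; positivity
  have hQid : Qe * L^2 = (u*p - (2*t-1)*L^2/2)^2 + u^2*X^2 := by
    rw [hQedef, hmd1, hmd2, hLsq, hp, hX]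
    ring
  -- x, y identities for the upper bound
  have hxid : (t*L^2 - u*p)^2 + u^2*X^2 = (t^2*L^2 - 2*t*u*p + u^2*M^2)*L^2 := by
    linear_combination u^2*hLag
  have hyid : ((1-t)*L^2 + u*p)^2 + u^2*X^2
      = ((1-t)^2*L^2 + 2*(1-t)*u*p + u^2*M^2)*L^2 := by
    linear_combination u^2*hLag
  have hxle : (t*L^2 - u*p)^2 + u^2*X^2 ≤ r^2*L^2 := by
    linarith [hxid, mul_le_mul_of_nonneg_right hC11 (sq_nonneg L)]
  have hyle : ((1-t)*L^2 + u*p)^2 + u^2*X^2 ≤ r^2*L^2 := by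
    linarith [hyid, mul_le_mul_of_nonneg_right hC21 (sq_nonneg L)]
  constructor
  · -- lower bound
    have hQlb := lower_aux r L M k t u p X Qe hr hrL hrM hk hk1 ht0 hu1 hkp hLag hC12 hQid
    have hlhs0 : 0 ≤ (-(1/2)+k) * Real.sqrt k * r :=
      mul_nonneg (mul_nonneg (by linarith) (Real.sqrt_nonneg k)) hr.le
    refine (Real.le_sqrt hlhs0 hQe0).mpr ?_
    have hsq : ((-(1/2)+k) * Real.sqrt k * r)^2 = k*(k-1/2)^2*r^2 := by
      rw [mul_pow, mul_pow, Real.sq_sqrt hk0]; ring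
    rw [hsq]; exact hQlb
  · -- upper bound
    have hH := H_aux r L M k t u p X hr hrL hrM hk0 ht1 hu0 hkp hLag hyle
    have hQub := upper_aux r L k (t*L^2 - u*p) ((1-t)*L^2 + u*p) (u^2*X^2) Qe
      hr hrL hk hk1 hxle hyle (by ring) (by positivity) hH
      (by linear_combination hQid)
    have h2 : Real.sqrt Qe ≤ Real.sqrt (((3/2-k)*r)^2) := by
      apply Real.sqrt_le_sqrt
      rw [mul_pow]; exact hQub
    rwa [Real.sqrt_sq (mul_nonneg (by linarith) hr.le)] at h2

end
end

section
/- Let r > 0 and 0 ≤ θ_0 ≤ π/3. Let s = v_1v_2 and s' = w_1w_2 be independent segments in the Euclidean plane, intersecting at q, with counter-clockwise endpoint order v_1, w_1, v_2, w_2, and suppose the directed angle ∠(s,s') ≤ θ_0. Let m be the midpoint of v_1 and v_2 and take polar coordinates (r_0, φ) centered at m with polar axis in the direction of v_1. Set r_1 = (−1/2 + cos θ_0)√(cos θ_0)·r and r_2 = (3/2 − cos θ_0)·r. Then w_1 or w_2 lies in U_1 ∪ U_2, where U_1 = {(r_0,φ): r_1 ≤ r_0 ≤ r_2, 0 ≤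 φ ≤ θ_0} and U_2 = {(r_0,φ): r_1 ≤ r_0 ≤ r_2, π ≤ φ ≤ π + θ_0}. -/
noncomputable section

/-- Counter-clockwise rotation of a plane vector `e` by the angle `φ`. -/
def rot (φ : ℝ) (e : ℝ × ℝ) : ℝ × ℝ :=
  (e.1 * Real.cos φ - e.2 * Real.sin φ, e.1 * Real.sin φ + e.2 * Real.cos φ)

/-- The annular sector of points whose polar coordinates `(ρ, φ)` centred at `m`, with
polar axis the unit vector `e`, satisfy `r₁ ≤ ρ ≤ r₂` and `φ₁ ≤ φ ≤ φ₂`. -/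
def polarSector (m e : ℝ × ℝ) (r₁ r₂ φ₁ φ₂ : ℝ) : Set (ℝ × ℝ) :=
  {p | ∃ ρ φ : ℝ, r₁ ≤ ρ ∧ ρ ≤ r₂ ∧ φ₁ ≤ φ ∧ φ ≤ φ₂ ∧ p = m + ρ • rot φ e}

set_option maxHeartbeats 1600000

lemma eDist_nonneg' (p q : ℝ × ℝ) : 0 ≤ eDist p q := Real.sqrt_nonneg _
lemma eDist_sq (p q : ℝ × ℝ) : eDist p q ^ 2 = (p.1 - q.1) ^ 2 + (p.2 - q.2) ^ 2 :=
  Real.sq_sqrt (by positivity)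
lemma eDist_eq_of_sq {p q : ℝ × ℝ} {z : ℝ} (hz : 0 ≤ z) (h : eDist p q ^ 2 = z ^ 2) :
    eDist p q = z := by
  have h1 := eDist_nonneg' p q
  have h2 : |eDist p q| = |z| := by
    rw [← Real.sqrt_sq_eq_abs, ← Real.sqrt_sq_eq_abs, h]
  rwa [abs_of_nonneg h1, abs_of_nonneg hz] at h2
lemma dist_sq_rep (e : ℝ × ℝ) (he : e.1 ^ 2 + e.2 ^ 2 = 1) (p q : ℝ × ℝ) (X Y : ℝ)
    (h1 : p.1 - q.1 = X * e.1 - Y * e.2) (h2 : p.2 - q.2 = X * e.2 + Y * e.1) :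
    eDist p q ^ 2 = X ^ 2 + Y ^ 2 := by
  rw [eDist_sq, h1, h2]; linear_combination (X ^ 2 + Y ^ 2) * he


lemma sq_range_of_unit (c s : ℝ) (h : c^2 + s^2 = 1) : -1 ≤ c ∧ c ≤ 1 := by
  constructor
  · nlinarith [sq_nonneg s, sq_nonneg (c+1)]
  · nlinarith [sq_nonneg s, sq_nonneg (c-1)]

lemma arccos_le_of {θ₀ z : ℝ} (h0 : 0 ≤ θ₀) (hπ : θ₀ ≤ Real.pi) (h : Real.cos θ₀ ≤ z) :
    Real.arccos z ≤ θ₀ := by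
  have h1 : Real.arccos z ≤ Real.arccos (Real.cos θ₀) := by
    rw [Real.arccos_eq_pi_div_two_sub_arcsin, Real.arccos_eq_pi_div_two_sub_arcsin]
    have := Real.monotone_arcsin h
    linarith
  rwa [Real.arccos_cos h0 hπ] at h1

lemma scalar_core (d r t ρ σ c c₀ s : ℝ)
    (hr : 0 < r) (hd : r < d)
    (hc₀ : 1/2 ≤ c₀) (hcc : c₀ ≤ c) (hc1 : c ≤ 1)
    (hcs : c^2 + s^2 = 1) (hρσ : r < ρ + σ)
    (h2 : (d/2 + t + ρ*c)^2 + (ρ*s)^2 ≤ r^2)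
    (h3 : (d/2 - t + σ*c)^2 + (σ*s)^2 ≤ r^2) :
    (c₀ - 1/2)^2 * c₀ * r^2 ≤ t^2 + ρ^2 + 2*t*ρ*c ∧
    t^2 + ρ^2 + 2*t*ρ*c ≤ (3/2 - c₀)^2 * r^2 := by
  have hc : 1/2 ≤ c := le_trans hc₀ hcc
  have hc0 : c₀ ≤ 1 := le_trans hcc hc1
  have e1 : ρ^2*c^2 + ρ^2*s^2 = ρ^2 := by linear_combination ρ^2*hcs
  have hσc : σ*c ≤ r - d/2 + t := by
    nlinarith [sq_nonneg (d/2 - t + σ*c + r), sq_nonneg (σ*s)]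
  have hρc : r*c - r + d/2 - t ≤ ρ*c := by nlinarith [hρσ, hσc]
  have hx : r*(c₀ - 1/2) ≤ t + ρ*c := by nlinarith [hρc]
  have hx0 : (0:ℝ) ≤ r*(c₀ - 1/2) := by nlinarith
  constructor
  · have h1a : (r*(c₀-1/2))^2 ≤ (t+ρ*c)^2 := pow_le_pow_left₀ hx0 hx 2
    have ha : (c₀-1/2)^2*c₀*r^2 ≤ (r*(c₀-1/2))^2 := by
      nlinarith [mul_nonneg (mul_nonneg (sq_nonneg (c₀-1/2)) (sq_nonneg r))
        (by linarith : (0:ℝ) ≤ 1 - c₀)]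
    have hb : (t+ρ*c)^2 ≤ t^2+ρ^2+2*t*ρ*c := by
      nlinarith [e1, sq_nonneg (ρ*s)]
    linarith [ha, h1a, hb]
  · have step1 : t^2+ρ^2+2*t*ρ*c ≤ r^2 - d^2/4 - d*t - d*(ρ*c) := by nlinarith [h2, e1]
    have step2 : d*(r*c - r + d/2 - t) ≤ d*(ρ*c) :=
      mul_le_mul_of_nonneg_left hρc (by linarith)
    have step3 : t^2+ρ^2+2*t*ρ*c ≤ r^2 + d*r*(1-c) - 3*d^2/4 := by
      nlinarith [step1, step2]
    have step4 : d*r*(1-c) ≤ d*r*(1-c₀) := by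
      nlinarith [mul_nonneg (mul_nonneg (by linarith : (0:ℝ) ≤ d) (by linarith : (0:ℝ) ≤ r))
        (by linarith : (0:ℝ) ≤ c - c₀)]
    have step5 : r^2 + d*r*(1-c₀) - 3*d^2/4 ≤ (5/4-c₀)*r^2 := by
      nlinarith [mul_nonneg (by linarith : (0:ℝ) ≤ d - r)
        (by nlinarith : (0:ℝ) ≤ 3*(d+r) - 4*r*(1-c₀))]
    nlinarith [step3, step4, step5, mul_nonneg (sq_nonneg (1-c₀)) (sq_nonneg r)]

lemma mem_sector_cos (m e w : ℝ × ℝ) (r₁ r₂ φ₁ φ₂ ρ₀ φ X Y : ℝ)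
    (hw1 : w.1 - m.1 = X * e.1 - Y * e.2) (hw2 : w.2 - m.2 = X * e.2 + Y * e.1)
    (hρ₀ : 0 < ρ₀)
    (hcos : Real.cos φ = X / ρ₀) (hsin : Real.sin φ = Y / ρ₀)
    (h1 : r₁ ≤ ρ₀) (h2 : ρ₀ ≤ r₂) (h3 : φ₁ ≤ φ) (h4 : φ ≤ φ₂) :
    w ∈ polarSector m e r₁ r₂ φ₁ φ₂ := by
  refine ⟨ρ₀, φ, h1, h2, h3, h4, ?_⟩
  have hne : ρ₀ ≠ 0 := ne_of_gt hρ₀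
  have hc : (m + ρ₀ • rot φ e) = (m.1 + ρ₀ * (e.1 * Real.cos φ - e.2 * Real.sin φ),
      m.2 + ρ₀ * (e.1 * Real.sin φ + e.2 * Real.cos φ)) := by
    simp [rot, Prod.ext_iff]
  rw [hc, hcos, hsin, Prod.ext_iff]
  constructor
  · show w.1 = m.1 + ρ₀ * (e.1 * (X / ρ₀) - e.2 * (Y / ρ₀))
    field_simp
    linear_combination hw1
  · show w.2 = m.2 + ρ₀ * (e.1 * (Y / ρ₀) + e.2 * (X / ρ₀))
    field_simp
    linear_combination hw2

lemma le_of_sq_le_sq'' (a b : ℝ) (h : a^2 ≤ b^2) (hb : 0 ≤ b) : a ≤ b := by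
  nlinarith [sq_nonneg (a-b), sq_nonneg (a+b)]

lemma exists_polar₁ (r θ₀ d t ρ σ c s r₁ r₂ : ℝ)
    (hr : 0 < r) (hd : r < d) (ht0 : 0 ≤ t)
    (hρ : 0 < ρ)
    (hθ0 : 0 ≤ θ₀) (hθπ : θ₀ ≤ Real.pi) (hc₀half : 1/2 ≤ Real.cos θ₀) (hc₀1 : Real.cos θ₀ ≤ 1)
    (hcc : Real.cos θ₀ ≤ c) (hc1 : c ≤ 1) (hs : 0 ≤ s) (hcs : c^2+s^2 = 1)
    (hρσ : r < ρ + σ)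
    (h2 : (d/2 + t + ρ*c)^2 + (ρ*s)^2 ≤ r^2)
    (h3 : (d/2 - t + σ*c)^2 + (σ*s)^2 ≤ r^2)
    (hr₁ : r₁ = (-(1/2) + Real.cos θ₀) * Real.sqrt (Real.cos θ₀) * r)
    (hr₂ : r₂ = (3/2 - Real.cos θ₀) * r) :
    ∃ ρ₀ φ : ℝ, 0 < ρ₀ ∧ r₁ ≤ ρ₀ ∧ ρ₀ ≤ r₂ ∧ 0 ≤ φ ∧ φ ≤ θ₀ ∧
      Real.cos φ = (t + ρ*c)/ρ₀ ∧ Real.sin φ = (ρ*s)/ρ₀ := by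
  set c₀ := Real.cos θ₀ with hc₀
  obtain ⟨hlow, hupp⟩ := scalar_core d r t ρ σ c c₀ s hr hd hc₀half hcc hc1 hcs hρσ h2 h3
  have hc : 1/2 ≤ c := le_trans hc₀half hcc
  have hcpos : (0:ℝ) < c := by linarith only [hc]
  have htρc : 0 ≤ t*ρ*c := mul_nonneg (mul_nonneg ht0 hρ.le) hcpos.le
  have hS0 : 0 < t^2+ρ^2+2*t*ρ*c := by
    have h1 := mul_pos hρ hρ
    have h2 := sq_nonneg t
    linarith only [h1, h2, htρc]
  have hid : (t+ρ*c)^2 + (ρ*s)^2 = t^2+ρ^2+2*t*ρ*c := by linear_combination ρ^2*hcs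
  set ρ₀ := Real.sqrt (t^2+ρ^2+2*t*ρ*c) with hρ₀def
  have hρ₀sq : ρ₀^2 = t^2+ρ^2+2*t*ρ*c := Real.sq_sqrt hS0.le
  have hρ₀pos : 0 < ρ₀ := Real.sqrt_pos.mpr hS0
  have hρc : 0 < ρ*c := mul_pos hρ hcpos
  have hx₁pos : 0 < t + ρ*c := by linarith only [ht0, hρc]
  have hx₁le : t + ρ*c ≤ ρ₀ :=
    le_of_sq_le_sq'' _ _ (by linarith only [hid, hρ₀sq, sq_nonneg (ρ*s)]) hρ₀pos.le
  have hy₁0 : 0 ≤ ρ*s := mul_nonneg hρ.le hs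
  have key : (t+ρ*c)^2 - c₀^2*((t+ρ*c)^2+(ρ*s)^2)
      = s^2*t*(t+2*ρ*c) + (c-c₀)*(c+c₀)*(t^2+ρ^2+2*t*ρ*c) := by
    linear_combination (-(t^2+2*t*ρ*c+c₀^2*ρ^2))*hcs
  have hkeynn : 0 ≤ (t+ρ*c)^2 - c₀^2*((t+ρ*c)^2+(ρ*s)^2) := by
    rw [key]
    have k0 : (0:ℝ) ≤ t+2*ρ*c := by linarith only [ht0, hρc]
    have k1 : 0 ≤ s^2*t*(t+2*ρ*c) := mul_nonneg (mul_nonneg (sq_nonneg s) ht0) k0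
    have k2 : 0 ≤ (c-c₀)*(c+c₀)*(t^2+ρ^2+2*t*ρ*c) :=
      mul_nonneg (mul_nonneg (by linarith only [hcc]) (by linarith only [hc, hc₀half])) hS0.le
    linarith only [k1, k2]
  have hc₀nn : (0:ℝ) ≤ c₀ := by linarith only [hc₀half]
  have hcosb : c₀*ρ₀ ≤ t+ρ*c := by
    apply le_of_sq_le_sq'' _ _ ?_ hx₁pos.le
    have e2 : (c₀*ρ₀)^2 = c₀^2*((t+ρ*c)^2+(ρ*s)^2) := by
      rw [mul_pow, hρ₀sq, ← hid]
    linarith only [hkeynn, e2]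
  refine ⟨ρ₀, Real.arccos ((t+ρ*c)/ρ₀), hρ₀pos, ?_, ?_, Real.arccos_nonneg _, ?_, ?_, ?_⟩
  · have hr₁sq : r₁^2 = (c₀-1/2)^2*c₀*r^2 := by
      rw [hr₁, mul_pow, mul_pow, Real.sq_sqrt hc₀nn]; ring
    exact le_of_sq_le_sq'' _ _ (by linarith only [hr₁sq, hlow, hρ₀sq]) hρ₀pos.le
  · have hr₂sq : r₂^2 = (3/2-c₀)^2*r^2 := by rw [hr₂]; ring
    have hr₂0 : 0 ≤ r₂ := by
      rw [hr₂]; exact mul_nonneg (by linarith only [hc₀1]) hr.le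
    exact le_of_sq_le_sq'' _ _ (by linarith only [hupp, hρ₀sq, hr₂sq]) hr₂0
  · exact arccos_le_of hθ0 hθπ ((le_div_iff₀ hρ₀pos).mpr hcosb)
  · exact Real.cos_arccos
      (le_trans (by norm_num) (div_nonneg hx₁pos.le hρ₀pos.le))
      ((div_le_one hρ₀pos).mpr hx₁le)
  · rw [Real.sin_arccos]
    have h1 : 1 - ((t+ρ*c)/ρ₀)^2 = ((ρ*s)/ρ₀)^2 := by
      field_simp
      linarith only [hid, hρ₀sq]
    rw [h1, Real.sqrt_sq (div_nonneg hy₁0 hρ₀pos.le)]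

/-- If two independent segments `v₁v₂`, `w₁w₂` intersect at `q` with counter-clockwise
endpoint order `v₁, w₁, v₂, w₂` and directed angle `∠(s,s') = ∠ w₁ q v₁ ≤ θ₀ ≤ π/3`, then
`w₁` or `w₂` lies in `U₁ ∪ U₂`, the annular sectors, in polar coordinates centred at
the midpoint `m` of `v₁v₂` with polar axis towards `v₁`, with radii in
`[r₁, r₂] = [(−1/2+cos θ₀)√(cos θ₀)·r, (3/2−cos θ₀)·r]` and angle in `[0, θ₀]`
resp. `[π, π + θ₀]`. -/
theorem independent_segments_endpoint_location (r θ₀ : ℝ) (hr : 0 < r)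
    (hθ₀0 : 0 ≤ θ₀) (hθ₀1 : θ₀ ≤ Real.pi / 3)
    (v₁ v₂ w₁ w₂ q : ℝ × ℝ)
    (hv : r < eDist v₁ v₂) (hw : r < eDist w₁ w₂)
    (h11 : eDist v₁ w₁ ≤ r) (h12 : eDist v₁ w₂ ≤ r)
    (h21 : eDist v₂ w₁ ≤ r) (h22 : eDist v₂ w₂ ≤ r)
    (hq₁ : q ∈ segment ℝ v₁ v₂) (hq₂ : q ∈ segment ℝ w₁ w₂)
    (hccw₁ : 0 < cross (v₁ - q) (w₁ - q)) (hccw₂ : 0 < cross (w₁ - q) (v₂ - q))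
    (hccw₃ : 0 < cross (v₂ - q) (w₂ - q)) (hccw₄ : 0 < cross (w₂ - q) (v₁ - q))
    (hang : angAt q w₁ v₁ ≤ θ₀)
    (m : ℝ × ℝ) (hm : m = midpoint ℝ v₁ v₂)
    (e : ℝ × ℝ) (he : e = (eDist m v₁)⁻¹ • (v₁ - m))
    (r₁ r₂ : ℝ)
    (hr₁ : r₁ = (-(1 / 2) + Real.cos θ₀) * Real.sqrt (Real.cos θ₀) * r)
    (hr₂ : r₂ = (3 / 2 - Real.cos θ₀) * r) :
    w₁ ∈ polarSector m e r₁ r₂ 0 θ₀ ∪ polarSector m e r₁ r₂ Real.pi (Real.pi + θ₀) ∨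
      w₂ ∈ polarSector m e r₁ r₂ 0 θ₀ ∪ polarSector m e r₁ r₂ Real.pi (Real.pi + θ₀) := by
  have hπ : (0:ℝ) < Real.pi := Real.pi_pos
  have hθπ : θ₀ ≤ Real.pi := by linarith
  have hc₀half : 1/2 ≤ Real.cos θ₀ := by
    have h := Real.cos_le_cos_of_nonneg_of_le_pi hθ₀0 (by linarith) hθ₀1
    rwa [Real.cos_pi_div_three] at h
  have hc₀1 : Real.cos θ₀ ≤ 1 := Real.cos_le_one θ₀
  obtain ⟨d, hd⟩ : ∃ x, eDist v₁ v₂ = x := ⟨_, rfl⟩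
  rw [hd] at hv
  have hd0 : 0 < d := lt_trans hr hv
  have hm1 : m.1 = (v₁.1 + v₂.1)/2 := by rw [hm]; simp [midpoint, AffineMap.lineMap_apply]; ring
  have hm2 : m.2 = (v₁.2 + v₂.2)/2 := by rw [hm]; simp [midpoint, AffineMap.lineMap_apply]; ring
  have hdsq := eDist_sq v₁ v₂
  rw [hd] at hdsq
  have hvm : (v₁.1 - m.1)^2 + (v₁.2 - m.2)^2 = (d/2)^2 := by
    rw [hm1, hm2]; linear_combination (-1/4 : ℝ) * hdsq
  have hmv : eDist m v₁ = d/2 := by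
    apply eDist_eq_of_sq (by linarith)
    rw [eDist_sq]; linear_combination hvm
  have hmvne : (d/2 : ℝ) ≠ 0 := by positivity
  have hec1 : e.1 = (d/2)⁻¹ * (v₁.1 - m.1) := by rw [he, hmv]; simp
  have hec2 : e.2 = (d/2)⁻¹ * (v₁.2 - m.2) := by rw [he, hmv]; simp
  have hu1 : v₁.1 - m.1 = (d/2) * e.1 := by rw [hec1]; field_simp
  have hu2 : v₁.2 - m.2 = (d/2) * e.2 := by rw [hec2]; field_simp
  have he1 : e.1^2 + e.2^2 = 1 := by
    rw [hec1, hec2]; field_simp; linear_combination 4*hvm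
  have hv21 : v₂.1 - m.1 = -((d/2) * e.1) := by linear_combination (-2:ℝ)*hm1 - hu1
  have hv22 : v₂.2 - m.2 = -((d/2) * e.2) := by linear_combination (-2:ℝ)*hm2 - hu2
  obtain ⟨a, b, ha, hb, hab, hqeq⟩ := hq₁
  have hqa1 : q.1 = a * v₁.1 + b * v₂.1 := by rw [← hqeq]; simp
  have hqa2 : q.2 = a * v₁.2 + b * v₂.2 := by rw [← hqeq]; simp
  obtain ⟨t, htdef⟩ : ∃ x, (a - b)*(d/2) = x := ⟨_, rfl⟩
  have hq1c : q.1 - m.1 = t * e.1 := by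
    rw [← htdef]; linear_combination hqa1 + a*hu1 + b*hv21 + m.1*hab
  have hq2c : q.2 - m.2 = t * e.2 := by
    rw [← htdef]; linear_combination hqa2 + a*hu2 + b*hv22 + m.2*hab
  have htd : t ≤ d/2 := by
    rw [← htdef]
    have h := mul_le_mul_of_nonneg_right (show a - b ≤ 1 by linarith) (show (0:ℝ) ≤ d/2 by linarith)
    linarith
  have htd' : -(d/2) ≤ t := by
    rw [← htdef]
    have h := mul_le_mul_of_nonneg_right (show -1 ≤ a - b by linarith) (show (0:ℝ) ≤ d/2 by linarith)
    linarith
  -- coordinates of w₁ and w₂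
  obtain ⟨x₁, hx₁⟩ : ∃ x, (w₁.1 - m.1)*e.1 + (w₁.2 - m.2)*e.2 = x := ⟨_, rfl⟩
  obtain ⟨y₁, hy₁⟩ : ∃ x, e.1*(w₁.2 - m.2) - e.2*(w₁.1 - m.1) = x := ⟨_, rfl⟩
  have hw11 : w₁.1 - m.1 = x₁ * e.1 - y₁ * e.2 := by
    rw [← hx₁, ← hy₁]; linear_combination (-(w₁.1 - m.1))*he1
  have hw12 : w₁.2 - m.2 = x₁ * e.2 + y₁ * e.1 := by
    rw [← hx₁, ← hy₁]; linear_combination (-(w₁.2 - m.2))*he1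
  obtain ⟨x₂, hx₂⟩ : ∃ x, (w₂.1 - m.1)*e.1 + (w₂.2 - m.2)*e.2 = x := ⟨_, rfl⟩
  obtain ⟨y₂, hy₂⟩ : ∃ x, e.1*(w₂.2 - m.2) - e.2*(w₂.1 - m.1) = x := ⟨_, rfl⟩
  have hw21 : w₂.1 - m.1 = x₂ * e.1 - y₂ * e.2 := by
    rw [← hx₂, ← hy₂]; linear_combination (-(w₂.1 - m.1))*he1
  have hw22 : w₂.2 - m.2 = x₂ * e.2 + y₂ * e.1 := by
    rw [← hx₂, ← hy₂]; linear_combination (-(w₂.2 - m.2))*he1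
  -- cross products in coordinates
  have hC1 : cross (v₁ - q) (w₁ - q) = (d/2 - t) * y₁ := by
    simp only [cross, Prod.fst_sub, Prod.snd_sub]
    rw [show v₁.1 - q.1 = (d/2 - t) * e.1 by linear_combination hu1 - hq1c,
        show v₁.2 - q.2 = (d/2 - t) * e.2 by linear_combination hu2 - hq2c,
        show w₁.1 - q.1 = (x₁ - t) * e.1 - y₁ * e.2 by linear_combination hw11 - hq1c,
        show w₁.2 - q.2 = (x₁ - t) * e.2 + y₁ * e.1 by linear_combination hw12 - hq2c]
    linear_combination ((d/2 - t)*y₁)*he1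
  have hC2 : cross (w₁ - q) (v₂ - q) = (d/2 + t) * y₁ := by
    simp only [cross, Prod.fst_sub, Prod.snd_sub]
    rw [show v₂.1 - q.1 = (-(d/2) - t) * e.1 by linear_combination hv21 - hq1c,
        show v₂.2 - q.2 = (-(d/2) - t) * e.2 by linear_combination hv22 - hq2c,
        show w₁.1 - q.1 = (x₁ - t) * e.1 - y₁ * e.2 by linear_combination hw11 - hq1c,
        show w₁.2 - q.2 = (x₁ - t) * e.2 + y₁ * e.1 by linear_combination hw12 - hq2c]
    linear_combination ((d/2 + t)*y₁)*he1
  have hC3 : cross (v₂ - q) (w₂ - q) = -((d/2 + t) * y₂) := by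
    simp only [cross, Prod.fst_sub, Prod.snd_sub]
    rw [show v₂.1 - q.1 = (-(d/2) - t) * e.1 by linear_combination hv21 - hq1c,
        show v₂.2 - q.2 = (-(d/2) - t) * e.2 by linear_combination hv22 - hq2c,
        show w₂.1 - q.1 = (x₂ - t) * e.1 - y₂ * e.2 by linear_combination hw21 - hq1c,
        show w₂.2 - q.2 = (x₂ - t) * e.2 + y₂ * e.1 by linear_combination hw22 - hq2c]
    linear_combination (-((d/2 + t)*y₂))*he1
  rw [hC1] at hccw₁
  rw [hC2] at hccw₂
  rw [hC3] at hccw₃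
  -- signs
  have hdt : 0 < d/2 - t := by
    rcases lt_or_ge t (d/2) with h | h
    · linarith only [h]
    · exfalso; have h0 : d/2 - t = 0 := by linarith only [h, htd]
      rw [h0, zero_mul] at hccw₁; exact lt_irrefl 0 hccw₁
  have hy₁pos : 0 < y₁ := by
    by_contra hcon
    push_neg at hcon
    have h := mul_nonneg (le_of_lt hdt) (neg_nonneg.mpr hcon)
    linarith only [h, hccw₁]
  have hdt2 : 0 < d/2 + t := by
    by_contra hcon
    push_neg at hcon
    have h := mul_nonneg (neg_nonneg.mpr hcon) hy₁pos.le
    linarith only [h, hccw₂]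
  have hy₂neg : y₂ < 0 := by
    by_contra hcon
    push_neg at hcon
    have h := mul_nonneg hdt2.le hcon
    linarith only [h, hccw₃]
  -- the distance ρ and the angle
  obtain ⟨ρ, hρdef⟩ : ∃ x, eDist q w₁ = x := ⟨_, rfl⟩
  have hρsq : ρ^2 = (x₁ - t)^2 + y₁^2 := by
    rw [← hρdef, dist_sq_rep e he1 q w₁ (t - x₁) (-y₁)
      (by linear_combination hq1c - hw11) (by linear_combination hq2c - hw12)]
    ring
  have hρpos : 0 < ρ := by
    have h0 : 0 ≤ ρ := hρdef ▸ eDist_nonneg' q w₁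
    rcases h0.lt_or_eq with h | h
    · exact h
    · exfalso
      rw [← h] at hρsq
      have h1 := sq_nonneg (x₁ - t)
      have h2 := mul_pos hy₁pos hy₁pos
      have h3 : y₁*y₁ = y₁^2 := by ring
      linarith only [hρsq, h1, h2, h3]
  have hqv₁ : eDist q v₁ = d/2 - t := by
    apply eDist_eq_of_sq (by linarith only [hdt])
    rw [dist_sq_rep e he1 q v₁ (t - d/2) 0
      (by linear_combination hq1c - hu1) (by linear_combination hq2c - hu2)]
    ring
  have hangle : angAt q w₁ v₁ = Real.arccos ((x₁ - t)/ρ) := by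
    unfold angAt
    rw [show (w₁.1 - q.1) * (v₁.1 - q.1) + (w₁.2 - q.2) * (v₁.2 - q.2)
        = (x₁ - t) * (d/2 - t) from by
      rw [show v₁.1 - q.1 = (d/2 - t) * e.1 by linear_combination hu1 - hq1c,
          show v₁.2 - q.2 = (d/2 - t) * e.2 by linear_combination hu2 - hq2c,
          show w₁.1 - q.1 = (x₁ - t) * e.1 - y₁ * e.2 by linear_combination hw11 - hq1c,
          show w₁.2 - q.2 = (x₁ - t) * e.2 + y₁ * e.1 by linear_combination hw12 - hq2c]
      linear_combination ((x₁ - t)*(d/2 - t))*he1, hρdef, hqv₁,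
      mul_div_mul_right (x₁ - t) ρ (ne_of_gt hdt)]
  rw [hangle] at hang
  -- define c and s
  obtain ⟨c, hcdef⟩ : ∃ x, (x₁ - t)/ρ = x := ⟨_, rfl⟩
  obtain ⟨s, hsdef⟩ : ∃ x, y₁/ρ = x := ⟨_, rfl⟩
  rw [hcdef] at hang
  have hρne : ρ ≠ 0 := ne_of_gt hρpos
  have hx₁t : x₁ - t = ρ*c := by rw [← hcdef]; field_simp
  have hy₁s : y₁ = ρ*s := by rw [← hsdef]; field_simp
  have hx₁v : x₁ = t + ρ*c := by linarith only [hx₁t]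
  have hs0 : 0 ≤ s := by rw [← hsdef]; exact div_nonneg hy₁pos.le hρpos.le
  have hcs : c^2 + s^2 = 1 := by
    rw [← hcdef, ← hsdef]
    field_simp
    linear_combination -hρsq
  have hcrange := sq_range_of_unit c s hcs
  have hccθ : Real.cos θ₀ ≤ c := by
    have h := Real.cos_le_cos_of_nonneg_of_le_pi (Real.arccos_nonneg ((x₁ - t)/ρ)) hθπ
      (by rw [hcdef]; exact hang)
    rwa [hcdef, Real.cos_arccos hcrange.1 hcrange.2] at h
  -- the second segment
  obtain ⟨a', b', ha', hb', hab', hqeq₂⟩ := hq₂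
  have hcomb1 : a'*w₁.1 + b'*w₂.1 = q.1 := by rw [← hqeq₂]; simp
  have hcomb2 : a'*w₁.2 + b'*w₂.2 = q.2 := by rw [← hqeq₂]; simp
  have hlin1 : a'*x₁ + b'*x₂ = t := by
    rw [← hx₁, ← hx₂]
    linear_combination e.1*hcomb1 + e.2*hcomb2 - (m.1*e.1 + m.2*e.2)*hab'
      + e.1*hq1c + e.2*hq2c + t*he1
  have hlin2 : a'*y₁ + b'*y₂ = 0 := by
    rw [← hy₁, ← hy₂]
    linear_combination e.1*hcomb2 - e.2*hcomb1 - (m.2*e.1 - m.1*e.2)*hab'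
      + e.1*hq2c - e.2*hq1c
  have hb'pos : 0 < b' := by
    rcases hb'.lt_or_eq with h | h
    · exact h
    · exfalso
      have ha1 : a' = 1 := by linarith only [hab', h]
      rw [← h, ha1] at hlin2
      linarith only [hlin2, hy₁pos]
  have ha'pos : 0 < a' := by
    rcases ha'.lt_or_eq with h | h
    · exact h
    · exfalso
      have hb1 : b' = 1 := by linarith only [hab', h]
      rw [← h, hb1] at hlin2
      linarith only [hlin2, hy₂neg]
  have hb'ne : b' ≠ 0 := ne_of_gt hb'pos
  obtain ⟨σ, hσdef⟩ : ∃ x, (a'/b')*ρ = x := ⟨_, rfl⟩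
  have hσpos : 0 < σ := by rw [← hσdef]; exact mul_pos (div_pos ha'pos hb'pos) hρpos
  have h5x : b'*(x₂ - t) = -(a'*(x₁ - t)) := by linear_combination hlin1 - t*hab'
  have h5y : b'*y₂ = -(a'*y₁) := by linear_combination hlin2
  have hx₂t : x₂ = t - σ*c := by
    rw [← hσdef]
    field_simp
    linear_combination h5x - a'*hx₁t
  have hy₂s : y₂ = -(σ*s) := by
    rw [← hσdef]
    field_simp
    linear_combination h5y - a'*hy₁s
  -- distances in scalar form
  have hwd : eDist w₁ w₂ ^ 2 = (ρ+σ)^2 := by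
    rw [dist_sq_rep e he1 w₁ w₂ (x₁-x₂) (y₁-y₂)
      (by linear_combination hw11 - hw21) (by linear_combination hw12 - hw22),
      hx₂t, hy₂s, hy₁s, hx₁v]
    linear_combination ((ρ+σ)^2)*hcs
  have hρσr : r < ρ + σ := by
    have hEq := eDist_eq_of_sq (show (0:ℝ) ≤ ρ+σ by linarith only [hρpos, hσpos]) hwd
    rw [hEq] at hw
    exact hw
  have h2s : (d/2 + t + ρ*c)^2 + (ρ*s)^2 ≤ r^2 := by
    have hsq := dist_sq_rep e he1 v₂ w₁ (-(d/2) - x₁) (-y₁)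
      (by linear_combination hv21 - hw11) (by linear_combination hv22 - hw12)
    have hle := pow_le_pow_left₀ (eDist_nonneg' v₂ w₁) h21 2
    rw [hsq, hx₁v, hy₁s] at hle
    linarith only [hle]
  have h3s : (d/2 - t + σ*c)^2 + (σ*s)^2 ≤ r^2 := by
    have hsq := dist_sq_rep e he1 v₁ w₂ (d/2 - x₂) (-y₂)
      (by linear_combination hu1 - hw21) (by linear_combination hu2 - hw22)
    have hle := pow_le_pow_left₀ (eDist_nonneg' v₁ w₂) h12 2
    rw [hsq, hx₂t, hy₂s] at hle
    linarith only [hle]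
  have h2s' : (d/2 + -t + σ*c)^2 + (σ*s)^2 ≤ r^2 := by linarith only [h3s]
  have h3s' : (d/2 - -t + ρ*c)^2 + (ρ*s)^2 ≤ r^2 := by linarith only [h2s]
  rcases le_total 0 t with htsgn | htsgn
  · -- use w₁, first sector
    obtain ⟨ρ₀, φ, hρ₀pos, hR1, hR2, hφ0, hφθ, hcosφ, hsinφ⟩ :=
      exists_polar₁ r θ₀ d t ρ σ c s r₁ r₂ hr hv htsgn hρpos hθ₀0 hθπ hc₀half hc₀1
        hccθ hcrange.2 hs0 hcs hρσr h2s h3s hr₁ hr₂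
    refine Or.inl (Set.mem_union_left _ ?_)
    apply mem_sector_cos m e w₁ r₁ r₂ 0 θ₀ ρ₀ φ (t + ρ*c) (ρ*s)
      ?_ ?_ hρ₀pos hcosφ hsinφ hR1 hR2 hφ0 hφθ
    · rw [← hx₁v, ← hy₁s]; exact hw11
    · rw [← hx₁v, ← hy₁s]; exact hw12
  · -- use w₂, second sector
    obtain ⟨ρ₀, ψ, hρ₀pos, hR1, hR2, hψ0, hψθ, hcosψ, hsinψ⟩ :=
      exists_polar₁ r θ₀ d (-t) σ ρ c s r₁ r₂ hr hv (by linarith only [htsgn]) hσpos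
        hθ₀0 hθπ hc₀half hc₀1 hccθ hcrange.2 hs0 hcs (by linarith only [hρσr]) h2s' h3s' hr₁ hr₂
    refine Or.inr (Set.mem_union_right _ ?_)
    apply mem_sector_cos m e w₂ r₁ r₂ Real.pi (Real.pi + θ₀) ρ₀ (Real.pi + ψ) (t - σ*c) (-(σ*s))
      ?_ ?_ hρ₀pos ?_ ?_ hR1 hR2 (by linarith only [hψ0]) (by linarith only [hψθ])
    · rw [← hx₂t, ← hy₂s]; exact hw21
    · rw [← hx₂t, ← hy₂s]; exact hw22
    · rw [Real.cos_add, Real.cos_pi, Real.sin_pi, hcosψ]; ring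
    · rw [Real.sin_add, Real.sin_pi, Real.cos_pi, hsinψ]; ring

end
end

section
/- Let R > 0, let k ≥ 4 be an integer, θ_0 = π/(3k), and define r_1, r_2 by cosh(2r_1) = cosh(R)/cos^2(θ_0/2) and cosh(2r_2) = (cosh(R) − 1)/cos^2(θ_0); assume r_1 < r_2 ≤ R. For 1 ≤ i ≤ 2k let U_i be the set of points with hyperbolic polar coordinates (r,φ) satisfying r_1 ≤ r ≤ r_2 and 3(i−1)θ_0 ≤ φ ≤ (3(i−1)+1)θ_0. Then for any 1 ≤ i ≤ k, 1 ≤ j ≤ 2k, any v ∈ U_i and any w ∈ U_j: if j = i + k then the hyperbolic distance d(v,w) is strictly greater than R, and if j ≠ i + k then d(v,w) ≤ R. -/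
open Real

noncomputable section

/-- The inverse hyperbolic cosine (for `x ≥ 1`). -/
def arcosh (x : ℝ) : ℝ := Real.log (x + Real.sqrt (x ^ 2 - 1))

/-- `cosh` of the hyperbolic distance between two points given in hyperbolic polar
coordinates `(r, φ)`:
`cosh d(u,v) = cosh r_u cosh r_v − sinh r_u sinh r_v cos (π − |π − |φ_u − φ_v||)`. -/
def hCosh (u v : ℝ × ℝ) : ℝ :=
  Real.cosh u.1 * Real.cosh v.1 -
    Real.sinh u.1 * Real.sinh v.1 * Real.cos (π - abs (π - abs (u.2 - v.2)))

/-- The hyperbolic distance between two points in hyperbolic polar coordinates. -/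
def hDist (u v : ℝ × ℝ) : ℝ := _root_.arcosh (hCosh u v)

/-- The hyperbolic annular sector `U_i` (for `1 ≤ i`): points whose hyperbolic polar
coordinates `(r, φ)` satisfy `r₁ ≤ r ≤ r₂` and `3(i-1)θ₀ ≤ φ ≤ (3(i-1)+1)θ₀`. -/
def hSector (r₁ r₂ θ₀ : ℝ) (i : ℕ) : Set (ℝ × ℝ) :=
  {p | r₁ ≤ p.1 ∧ p.1 ≤ r₂ ∧
    3 * ((i : ℝ) - 1) * θ₀ ≤ p.2 ∧ p.2 ≤ (3 * ((i : ℝ) - 1) + 1) * θ₀}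

set_option maxHeartbeats 2000000

lemma arcosh_cosh {R : ℝ} (hR : 0 ≤ R) : _root_.arcosh (Real.cosh R) = R := by
  unfold _root_.arcosh
  have h1 : Real.cosh R ^ 2 - 1 = Real.sinh R ^ 2 := by
    have := Real.cosh_sq R; linarith
  rw [h1, Real.sqrt_sq (by rw [← Real.sinh_zero]; exact Real.sinh_le_sinh.mpr hR),
    Real.cosh_add_sinh, Real.log_exp]

lemma lt_arcosh {R x : ℝ} (hR : 0 ≤ R) (h : Real.cosh R < x) : R < _root_.arcosh x := by
  have h1 : (1:ℝ) ≤ Real.cosh R := Real.one_le_cosh R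
  rw [← _root_.arcosh_cosh hR]
  unfold _root_.arcosh
  apply Real.log_lt_log (by positivity)
  have : Real.sqrt (Real.cosh R ^ 2 - 1) ≤ Real.sqrt (x ^ 2 - 1) := by
    apply Real.sqrt_le_sqrt; nlinarith
  linarith

lemma arcosh_le {R x : ℝ} (hR : 0 ≤ R) (h1 : 1 ≤ x) (h : x ≤ Real.cosh R) : _root_.arcosh x ≤ R := by
  rw [← _root_.arcosh_cosh hR]
  unfold _root_.arcosh
  have h2 : (1:ℝ) ≤ Real.cosh R := Real.one_le_cosh R
  apply Real.log_le_log (by positivity)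
  have : Real.sqrt (x ^ 2 - 1) ≤ Real.sqrt (Real.cosh R ^ 2 - 1) := by
    apply Real.sqrt_le_sqrt; nlinarith
  linarith

lemma cosh_combo_mono {a a' b b' c : ℝ} (ha : 0 ≤ a) (hb : 0 ≤ b)
    (haa : a ≤ a') (hbb : b ≤ b') (hc : 0 ≤ c) :
    Real.cosh a * Real.cosh b + c * (Real.sinh a * Real.sinh b) ≤
    Real.cosh a' * Real.cosh b' + c * (Real.sinh a' * Real.sinh b') := by
  have h1 : Real.cosh a ≤ Real.cosh a' := by
    rw [Real.cosh_le_cosh, abs_of_nonneg ha, abs_of_nonneg (ha.trans haa)]; exact haa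
  have h2 : Real.cosh b ≤ Real.cosh b' := by
    rw [Real.cosh_le_cosh, abs_of_nonneg hb, abs_of_nonneg (hb.trans hbb)]; exact hbb
  have h3 : Real.sinh a ≤ Real.sinh a' := Real.sinh_le_sinh.mpr haa
  have h4 : Real.sinh b ≤ Real.sinh b' := Real.sinh_le_sinh.mpr hbb
  have h5 : 0 ≤ Real.sinh a := by rw [← Real.sinh_zero]; exact Real.sinh_le_sinh.mpr ha
  have h6 : 0 ≤ Real.sinh b := by rw [← Real.sinh_zero]; exact Real.sinh_le_sinh.mpr hb
  have h7 : 0 ≤ Real.sinh a' := by linarith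
  have m1 : Real.cosh a * Real.cosh b ≤ Real.cosh a' * Real.cosh b' :=
    mul_le_mul h1 h2 (Real.cosh_pos b).le (Real.cosh_pos a').le
  have m2 : Real.sinh a * Real.sinh b ≤ Real.sinh a' * Real.sinh b' :=
    mul_le_mul h3 h4 h6 h7
  nlinarith [mul_le_mul_of_nonneg_left m2 hc]

/-- For `R > 0`, `k ≥ 4`, `θ₀ = π/(3k)` and `0 ≤ r₁ < r₂ ≤ R` defined by
`cosh(2r₁) = cosh R / cos²(θ₀/2)` and `cosh(2r₂) = (cosh R − 1)/cos²(θ₀)`: any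
`v ∈ U_i` (`1 ≤ i ≤ k`) and `w ∈ U_j` (`1 ≤ j ≤ 2k`) satisfy `d(v,w) > R` if `j = i + k`
and `d(v,w) ≤ R` otherwise. -/
theorem hyperbolic_sector_distances (R : ℝ) (hR : 0 < R) (k : ℕ) (hk : 4 ≤ k)
    (θ₀ r₁ r₂ : ℝ) (hθ₀ : θ₀ = π / (3 * k))
    (hr₁0 : 0 ≤ r₁)
    (hr₁ : Real.cosh (2 * r₁) = Real.cosh R / Real.cos (θ₀ / 2) ^ 2)
    (hr₂ : Real.cosh (2 * r₂) = (Real.cosh R - 1) / Real.cos θ₀ ^ 2)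
    (h12 : r₁ < r₂) (h2R : r₂ ≤ R)
    (i j : ℕ) (hi1 : 1 ≤ i) (hik : i ≤ k) (hj1 : 1 ≤ j) (hjk : j ≤ 2 * k)
    (v w : ℝ × ℝ) (hv : v ∈ hSector r₁ r₂ θ₀ i) (hw : w ∈ hSector r₁ r₂ θ₀ j) :
    (j = i + k → R < hDist v w) ∧ (j ≠ i + k → hDist v w ≤ R) := by
  obtain ⟨hv1, hv2, hv3, hv4⟩ := hv
  obtain ⟨hw1, hw2, hw3, hw4⟩ := hw
  have hπ : 0 < π := Real.pi_pos
  have hk4 : (4:ℝ) ≤ (k:ℝ) := by exact_mod_cast hk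
  have hi1' : (1:ℝ) ≤ (i:ℝ) := by exact_mod_cast hi1
  have hj1' : (1:ℝ) ≤ (j:ℝ) := by exact_mod_cast hj1
  have hik' : (i:ℝ) ≤ (k:ℝ) := by exact_mod_cast hik
  have hjk' : (j:ℝ) ≤ 2*(k:ℝ) := by exact_mod_cast hjk
  have hθpos : 0 < θ₀ := by rw [hθ₀]; positivity
  have hθ12 : θ₀ ≤ π / 12 := by
    rw [hθ₀]
    apply div_le_div_of_nonneg_left hπ.le (by norm_num) (by linarith)
  have h3kθ : 3 * (k:ℝ) * θ₀ = π := by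
    rw [hθ₀]; field_simp
  have hcos1 : 0 < Real.cos θ₀ :=
    Real.cos_pos_of_mem_Ioo ⟨by linarith, by linarith⟩
  have hcos2 : 0 < Real.cos (2*θ₀) :=
    Real.cos_pos_of_mem_Ioo ⟨by linarith, by linarith⟩
  have hcosh2 : 0 < Real.cos (θ₀/2) :=
    Real.cos_pos_of_mem_Ioo ⟨by linarith, by linarith⟩
  have hsin2 : 0 < Real.sin (θ₀/2) := Real.sin_pos_of_pos_of_lt_pi (by linarith) (by linarith)
  have hv0 : 0 ≤ v.1 := hr₁0.trans hv1
  have hw0 : 0 ≤ w.1 := hr₁0.trans hw1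
  have hsv : 0 ≤ Real.sinh v.1 := by rw [← Real.sinh_zero]; exact Real.sinh_le_sinh.mpr hv0
  have hsw : 0 ≤ Real.sinh w.1 := by rw [← Real.sinh_zero]; exact Real.sinh_le_sinh.mpr hw0
  have hprod : 0 ≤ Real.sinh v.1 * Real.sinh w.1 := mul_nonneg hsv hsw
  have hcc1 : Real.cos (θ₀/2) ^ 2 ≠ 0 := by positivity
  have hcc2 : Real.cos θ₀ ^ 2 ≠ 0 := by positivity
  rw [eq_div_iff hcc1] at hr₁
  rw [eq_div_iff hcc2] at hr₂
  -- identities for cosh / cos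
  have ech1 : Real.cosh (2*r₁) = 2 * Real.cosh r₁ ^ 2 - 1 := by
    have h := Real.cosh_two_mul r₁
    have h2 := Real.cosh_sq r₁
    linarith
  have ech2 : Real.cosh (2*r₂) = 2 * Real.cosh r₂ ^ 2 - 1 := by
    have h := Real.cosh_two_mul r₂
    have h2 := Real.cosh_sq r₂
    linarith
  have ec1 : Real.cos θ₀ = 2 * Real.cos (θ₀/2) ^ 2 - 1 := by
    have h := Real.cos_two_mul (θ₀/2)
    rw [show 2 * (θ₀/2) = θ₀ by ring] at h
    exact h
  have ec2 : Real.cos (2*θ₀) = 2 * Real.cos θ₀ ^ 2 - 1 := Real.cos_two_mul θ₀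
  have es1 : Real.sin (θ₀/2) ^ 2 = 1 - Real.cos (θ₀/2) ^ 2 := Real.sin_sq (θ₀/2)
  have eh1 : Real.sinh r₁ ^ 2 = Real.cosh r₁ ^ 2 - 1 := by
    have := Real.cosh_sq r₁; linarith
  have eh2 : Real.sinh r₂ ^ 2 = Real.cosh r₂ ^ 2 - 1 := by
    have := Real.cosh_sq r₂; linarith
  have hCoshEq0 : hCosh v w = Real.cosh v.1 * Real.cosh w.1 -
      Real.sinh v.1 * Real.sinh w.1 * Real.cos (π - abs (π - abs (v.2 - w.2))) := rfl
  obtain ⟨X, hX⟩ : ∃ x : ℝ, x = |v.2 - w.2| := ⟨_, rfl⟩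
  obtain ⟨A, hA⟩ : ∃ a : ℝ, a = π - |π - X| := ⟨_, rfl⟩
  have hA' : A = π - abs (π - abs (v.2 - w.2)) := by rw [hA, hX]
  rw [← hA'] at hCoshEq0
  have hXnn : 0 ≤ X := by rw [hX]; exact abs_nonneg _
  have hAπ : A ≤ π := by
    have : 0 ≤ |π - X| := abs_nonneg _
    simp only [hA]; linarith
  have hcosle : Real.cos A ≤ 1 := Real.cos_le_one A
  have hCoshEq : hCosh v w = Real.cosh v.1 * Real.cosh w.1 -
      Real.sinh v.1 * Real.sinh w.1 * Real.cos A := hCoshEq0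
  have hge1 : 1 ≤ hCosh v w := by
    rw [hCoshEq]
    have h1 := Real.cosh_sub v.1 w.1
    have h2 : Real.sinh v.1 * Real.sinh w.1 * Real.cos A ≤ Real.sinh v.1 * Real.sinh w.1 :=
      mul_le_of_le_one_right hprod hcosle
    linarith [Real.one_le_cosh (v.1 - w.1)]
  constructor
  · -- j = i + k : far case
    intro hj
    have hji : (j:ℝ) = (i:ℝ) + (k:ℝ) := by exact_mod_cast congrArg (Nat.cast : ℕ → ℝ) hj
    have e : 3*((j:ℝ)-1)*θ₀ - (3*((i:ℝ)-1)+1)*θ₀ = 3*(k:ℝ)*θ₀ - θ₀ := by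
      rw [hji]; ring
    have e' : (3*((j:ℝ)-1)+1)*θ₀ - 3*((i:ℝ)-1)*θ₀ = 3*(k:ℝ)*θ₀ + θ₀ := by
      rw [hji]; ring
    have hba1 : π - θ₀ ≤ w.2 - v.2 := by linarith
    have hba2 : w.2 - v.2 ≤ π + θ₀ := by linarith
    have hXeq : X = w.2 - v.2 := by
      rw [hX, abs_sub_comm, abs_of_nonneg (by linarith)]
    have hY : |π - X| ≤ θ₀ := by
      rw [hXeq, abs_le]; constructor <;> linarith
    have hAlb : π - θ₀ ≤ A := by simp only [hA]; linarith
    have hcosA : Real.cos A ≤ -(Real.cos θ₀) := by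
      have h := Real.cos_le_cos_of_nonneg_of_le_pi (by linarith : (0:ℝ) ≤ π - θ₀) hAπ hAlb
      rwa [Real.cos_pi_sub] at h
    have step1 : Real.cosh v.1 * Real.cosh w.1 +
        Real.cos θ₀ * (Real.sinh v.1 * Real.sinh w.1) ≤ hCosh v w := by
      rw [hCoshEq]
      linarith [mul_le_mul_of_nonneg_left hcosA hprod]
    have step2 := cosh_combo_mono (a := r₁) (b := r₁) (a' := v.1) (b' := w.1)
      hr₁0 hr₁0 hv1 hw1 hcos1.le
    have id1 : Real.cosh r₁ * Real.cosh r₁ + Real.cos θ₀ * (Real.sinh r₁ * Real.sinh r₁)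
        = Real.cosh R + Real.sin (θ₀/2) ^ 2 := by
      linear_combination hr₁ + Real.sinh r₁ * Real.sinh r₁ * ec1 +
        (2*Real.cos (θ₀/2)^2 - 1) * eh1 - es1 - Real.cos (θ₀/2)^2 * ech1
    have hkey : Real.cosh R < hCosh v w := by
      linarith [pow_pos hsin2 2]
    exact _root_.lt_arcosh hR.le hkey
  · -- j ≠ i + k : near case
    intro hj
    have hAub : A ≤ π - 2*θ₀ := by
      rcases lt_or_gt_of_ne hj with hlt | hgt
      · -- j < i + k
        have hlt' : (j:ℝ) + 1 ≤ (i:ℝ) + (k:ℝ) := by exact_mod_cast Nat.succ_le_of_lt hlt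
        have hd1 : 3*((j:ℝ)-(i:ℝ)) + 1 ≤ 3*(k:ℝ) - 2 := by linarith
        have hd2 : 3*((i:ℝ)-(j:ℝ)) + 1 ≤ 3*(k:ℝ) - 2 := by linarith
        have hub : w.2 - v.2 ≤ π - 2*θ₀ := by
          linarith [mul_le_mul_of_nonneg_right hd1 hθpos.le]
        have hub' : v.2 - w.2 ≤ π - 2*θ₀ := by
          linarith [mul_le_mul_of_nonneg_right hd2 hθpos.le]
        have hXle : X ≤ π - 2*θ₀ := by
          rw [hX, abs_le]; constructor <;> linarith
        have : 2*θ₀ ≤ |π - X| := le_trans (by linarith) (le_abs_self _)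
        simp only [hA]; linarith
      · -- j > i + k
        have hgt' : (i:ℝ) + (k:ℝ) + 1 ≤ (j:ℝ) := by exact_mod_cast Nat.succ_le_of_lt hgt
        have hd1 : 3*(k:ℝ) + 2 ≤ 3*((j:ℝ)-(i:ℝ)) - 1 := by linarith
        have hlb : π + 2*θ₀ ≤ w.2 - v.2 := by
          linarith [mul_le_mul_of_nonneg_right hd1 hθpos.le]
        have hXge : π + 2*θ₀ ≤ X := by
          rw [hX, abs_sub_comm]
          exact le_trans hlb (le_abs_self _)
        have : 2*θ₀ ≤ |π - X| := by
          rw [abs_sub_comm]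
          exact le_trans (by linarith) (le_abs_self _)
        simp only [hA]; linarith
    have hA0 : 0 ≤ A := by
      -- X ≤ 2π
      have hv2nn : 0 ≤ v.2 :=
        le_trans (mul_nonneg (by linarith) hθpos.le) hv3
      have hw2nn : 0 ≤ w.2 :=
        le_trans (mul_nonneg (by linarith) hθpos.le) hw3
      have ha1 : 3*((i:ℝ)-1) + 1 ≤ 3*(k:ℝ) := by linarith
      have ha2 : 3*((j:ℝ)-1) + 1 ≤ 6*(k:ℝ) := by linarith
      have hv2ub : v.2 ≤ π := by
        linarith [mul_le_mul_of_nonneg_right ha1 hθpos.le]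
      have hw2ub : w.2 ≤ 2*π := by
        linarith [mul_le_mul_of_nonneg_right ha2 hθpos.le]
      have hX2π : X ≤ 2*π := by
        rw [hX, abs_le]; constructor <;> linarith
      have : |π - X| ≤ π := by
        rw [abs_le]; constructor <;> linarith
      simp only [hA]; linarith
    have hcosA : -(Real.cos (2*θ₀)) ≤ Real.cos A := by
      have h := Real.cos_le_cos_of_nonneg_of_le_pi hA0 (by linarith : π - 2*θ₀ ≤ π) hAub
      rwa [Real.cos_pi_sub] at h
    have step1 : hCosh v w ≤ Real.cosh v.1 * Real.cosh w.1 +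
        Real.cos (2*θ₀) * (Real.sinh v.1 * Real.sinh w.1) := by
      rw [hCoshEq]
      linarith [mul_le_mul_of_nonneg_left hcosA hprod]
    have step2 := cosh_combo_mono (a := v.1) (b := w.1) (a' := r₂) (b' := r₂)
      hv0 hw0 hv2 hw2 hcos2.le
    have id2 : Real.cosh r₂ * Real.cosh r₂ + Real.cos (2*θ₀) * (Real.sinh r₂ * Real.sinh r₂)
        = Real.cosh R - Real.cos θ₀ ^ 2 := by
      linear_combination hr₂ + Real.sinh r₂ * Real.sinh r₂ * ec2 +
        (2*Real.cos θ₀^2 - 1) * eh2 - Real.cos θ₀^2 * ech2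
    have hkey : hCosh v w ≤ Real.cosh R := by
      linarith [pow_pos hcos1 2]
    exact _root_.arcosh_le hR.le hge1 hkey

end
end
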